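/- arXiv:1708.01231 — 6 statements merged into one kernel-verified Lean document; each statement's English description precedes it below -/
import Mathlib

section
/- Let n and k be positive integers, let E_k := {(i,j) ∈ ℤ² : |j−i| ≥ k+1}, and let h : {0,1,…,n−1} → ℝ be a nonincreasing function. Then for every function u : {1,…,n} → ℤ it holds that H(h,E_k,u) ≥ H(h,E_k,Mu), where Mu is the nondecreasing rearrangement of u. -/
noncomputable section

open Classical in
/-- The total hostility `H(h,E,u)` of the arrangement `u` of `n` dinosaurs (placed at the
positions `{1,…,n}`) with respect to the enemy list `E` and the hostility function `h`. -/
def Hostility (n : ℕ) (h : ℕ → ℝ) (E : Set (ℤ × ℤ)) (u : ℕ → ℤ) : ℝ :=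
  ∑ x ∈ Finset.Icc 1 n, ∑ y ∈ Finset.Icc x n, if (u x, u y) ∈ E then h (y - x) else 0

/-- The nondecreasing rearrangement `Mu` of `u : {1,…,n} → ℤ`:
`Mu(x) = min {j : |{y ∈ {1,…,n} : u y ≤ j}| ≥ x}`. -/
def Mrearr (n : ℕ) (u : ℕ → ℤ) (x : ℕ) : ℤ :=
  sInf {j : ℤ | x ≤ ((Finset.Icc 1 n).filter (fun y => u y ≤ j)).card}

/-- The enemy list `E_k = {(i,j) ∈ ℤ² : |j - i| ≥ k + 1}`. -/
def enemyList (k : ℕ) : Set (ℤ × ℤ) := {q : ℤ × ℤ | (k : ℤ) + 1 ≤ |q.2 - q.1|}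

namespace DinoAux

open Finset

/-- count of values ≤ j -/
def cnt (n : ℕ) (u : ℕ → ℤ) (j : ℤ) : ℕ := ((Finset.Icc 1 n).filter (fun y => u y ≤ j)).card

lemma Mrearr_eq (n : ℕ) (u : ℕ → ℤ) (x : ℕ) : Mrearr n u x = sInf {j : ℤ | x ≤ cnt n u j} := rfl

lemma cnt_mono (n : ℕ) (u : ℕ → ℤ) {j j' : ℤ} (hj : j ≤ j') : cnt n u j ≤ cnt n u j' := by
  apply Finset.card_le_card
  intro y hy
  simp only [Finset.mem_filter] at hy ⊢
  exact ⟨hy.1, le_trans hy.2 hj⟩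

lemma cnt_le (n : ℕ) (u : ℕ → ℤ) (j : ℤ) : cnt n u j ≤ n := by
  have := Finset.card_filter_le (Finset.Icc 1 n) (fun y => u y ≤ j)
  simpa [cnt, Nat.card_Icc] using this

lemma setM_nonempty (n : ℕ) (u : ℕ → ℤ) {x : ℕ} (hxn : x ≤ n) (hx1 : 1 ≤ x) :
    {j : ℤ | x ≤ cnt n u j}.Nonempty := by
  have hne : (Finset.Icc 1 n).Nonempty := by
    refine ⟨1, ?_⟩; simp [Finset.mem_Icc]; omega
  refine ⟨(Finset.Icc 1 n).sup' hne u, ?_⟩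
  have : (Finset.Icc 1 n).filter (fun y => u y ≤ (Finset.Icc 1 n).sup' hne u) = Finset.Icc 1 n := by
    apply Finset.filter_true_of_mem
    intro y hy
    exact Finset.le_sup' u hy
  simp only [Set.mem_setOf_eq, cnt, this, Nat.card_Icc]
  omega

lemma setM_bdd (n : ℕ) (u : ℕ → ℤ) {x : ℕ} (hx1 : 1 ≤ x) :
    BddBelow {j : ℤ | x ≤ cnt n u j} := by
  by_cases hn : n = 0
  · subst hn
    refine ⟨0, ?_⟩
    intro j hj
    simp only [Set.mem_setOf_eq, cnt] at hj
    simp at hj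
    omega
  have hne : (Finset.Icc 1 n).Nonempty := by
    refine ⟨1, ?_⟩; simp [Finset.mem_Icc]; omega
  refine ⟨(Finset.Icc 1 n).inf' hne u, ?_⟩
  intro j hj
  simp only [Set.mem_setOf_eq] at hj
  by_contra hlt
  push_neg at hlt
  have : (Finset.Icc 1 n).filter (fun y => u y ≤ j) = ∅ := by
    apply Finset.filter_false_of_mem
    intro y hy
    have := Finset.inf'_le u hy
    omega
  rw [cnt, this] at hj
  simp at hj
  omega

lemma Mrearr_mem (n : ℕ) (u : ℕ → ℤ) {x : ℕ} (hx1 : 1 ≤ x) (hxn : x ≤ n) :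
    x ≤ cnt n u (Mrearr n u x) := by
  have := Int.csInf_mem (setM_nonempty n u hxn hx1) (setM_bdd n u hx1)
  rw [← Mrearr_eq] at this
  exact this

lemma Mrearr_le_iff (n : ℕ) (u : ℕ → ℤ) {x : ℕ} (hx1 : 1 ≤ x) (hxn : x ≤ n) (j : ℤ) :
    Mrearr n u x ≤ j ↔ x ≤ cnt n u j := by
  constructor
  · intro hle
    exact le_trans (Mrearr_mem n u hx1 hxn) (cnt_mono n u hle)
  · intro hcnt
    rw [Mrearr_eq]
    exact csInf_le (setM_bdd n u hx1) hcnt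

lemma Mrearr_mono (n : ℕ) (u : ℕ → ℤ) {x y : ℕ} (hx1 : 1 ≤ x) (hxy : x ≤ y) (hyn : y ≤ n) :
    Mrearr n u x ≤ Mrearr n u y := by
  rw [Mrearr_le_iff n u hx1 (le_trans hxy hyn)]
  exact le_trans hxy (Mrearr_mem n u (le_trans hx1 hxy) hyn)

lemma cnt_Mrearr (n : ℕ) (u : ℕ → ℤ) (j : ℤ) : cnt n (Mrearr n u) j = cnt n u j := by
  have h1 : (Finset.Icc 1 n).filter (fun x => Mrearr n u x ≤ j) = Finset.Icc 1 (cnt n u j) := by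
    ext x
    simp only [Finset.mem_filter, Finset.mem_Icc]
    constructor
    · rintro ⟨⟨h1x, hxn⟩, hle⟩
      exact ⟨h1x, (Mrearr_le_iff n u h1x hxn j).1 hle⟩
    · rintro ⟨h1x, hxc⟩
      have hxn : x ≤ n := le_trans hxc (cnt_le n u j)
      exact ⟨⟨h1x, hxn⟩, (Mrearr_le_iff n u h1x hxn j).2 hxc⟩
  rw [cnt, h1, Nat.card_Icc]
  omega


section Deletion

variable {n : ℕ} {u : ℕ → ℤ}

/-- rank of the last value -/
def prank (n : ℕ) (u : ℕ → ℤ) : ℕ := cnt n u (u n)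

lemma prank_pos (hn : 1 ≤ n) : 1 ≤ prank n u := by
  rw [prank, cnt]
  have : n ∈ (Finset.Icc 1 n).filter (fun y => u y ≤ u n) := by
    simp [Finset.mem_Icc]; omega
  exact Finset.card_pos.2 ⟨n, this⟩

lemma prank_le (hn : 1 ≤ n) : prank n u ≤ n := cnt_le n u (u n)

lemma cnt_pred (hn : 1 ≤ n) (j : ℤ) :
    cnt n u j = cnt (n - 1) u j + (if u n ≤ j then 1 else 0) := by
  have hicc : Finset.Icc 1 n = insert n (Finset.Icc 1 (n - 1)) := by
    ext x; simp [Finset.mem_Icc, Finset.mem_insert]; omega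
  have hnmem : n ∉ Finset.Icc 1 (n - 1) := by simp [Finset.mem_Icc]; omega
  rw [cnt, cnt, hicc, Finset.filter_insert]
  split_ifs with hw
  · rw [Finset.card_insert_of_notMem (fun hc => hnmem (Finset.mem_of_mem_filter _ hc))]
  · rfl

lemma cnt_lt_prank (hn : 1 ≤ n) {j : ℤ} (hj : j < u n) : cnt n u j ≤ prank n u - 1 := by
  have h1 : (Finset.Icc 1 n).filter (fun y => u y ≤ j) ⊆
      ((Finset.Icc 1 n).filter (fun y => u y ≤ u n)).erase n := by
    intro x hx
    simp only [Finset.mem_filter, Finset.mem_erase] at hx ⊢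
    refine ⟨fun hc => ?_, hx.1, le_trans hx.2 (le_of_lt hj)⟩
    subst hc; omega
  have h2 := Finset.card_le_card h1
  rw [Finset.card_erase_of_mem (by simp [Finset.mem_filter, Finset.mem_Icc]; omega)] at h2
  exact h2

lemma Mrearr_prank (hn : 1 ≤ n) : Mrearr n u (prank n u) = u n := by
  have hp1 : 1 ≤ prank n u := prank_pos hn
  have hpn : prank n u ≤ n := prank_le hn
  have hle : Mrearr n u (prank n u) ≤ u n :=
    (Mrearr_le_iff n u hp1 hpn (u n)).2 (le_refl _)
  rcases lt_or_ge (Mrearr n u (prank n u)) (u n) with hlt | hge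
  · exfalso
    have := Mrearr_mem n u hp1 hpn
    have := cnt_lt_prank (u := u) hn hlt
    omega
  · omega

lemma Mrearr_pred_lt (hn : 1 ≤ n) {x : ℕ} (hx1 : 1 ≤ x) (hxp : x < prank n u) :
    Mrearr (n - 1) u x = Mrearr n u x := by
  rw [Mrearr_eq, Mrearr_eq]
  congr 1
  ext j
  simp only [Set.mem_setOf_eq]
  have hc := cnt_pred (u := u) hn j
  split_ifs at hc with hw
  · have hpj : prank n u ≤ cnt n u j := cnt_mono n u hw
    constructor <;> intro <;> omega
  · omega

lemma Mrearr_pred_ge (hn : 1 ≤ n) {x : ℕ} (hxp : prank n u ≤ x) (hxn : x ≤ n - 1) :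
    Mrearr (n - 1) u x = Mrearr n u (x + 1) := by
  rw [Mrearr_eq, Mrearr_eq]
  congr 1
  ext j
  simp only [Set.mem_setOf_eq]
  have hc := cnt_pred (u := u) hn j
  split_ifs at hc with hw
  · omega
  · push_neg at hw
    have := cnt_lt_prank (u := u) hn (by omega : j < u n)
    have hp1 : 1 ≤ prank n u := prank_pos hn
    constructor <;> intro <;> omega

end Deletion

open Classical in
/-- summand -/
def ff (k : ℕ) (h : ℕ → ℝ) (u : ℕ → ℤ) (x y : ℕ) : ℝ :=
  if (u x, u y) ∈ enemyList k then h (y - x) else 0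

lemma hostility_eq (n k : ℕ) (h : ℕ → ℝ) (u : ℕ → ℤ) :
    Hostility n h (enemyList k) u = ∑ x ∈ Finset.Icc 1 n, ∑ y ∈ Finset.Icc x n, ff k h u x y := rfl

lemma enemy_iff (k : ℕ) (a b : ℤ) :
    ((a, b) ∈ enemyList k) ↔ (b ≤ a - k - 1 ∨ a + k + 1 ≤ b) := by
  simp only [enemyList, Set.mem_setOf_eq, le_abs]
  omega

lemma ff_diag (k : ℕ) (h : ℕ → ℝ) (u : ℕ → ℤ) (x : ℕ) : ff k h u x x = 0 := by
  rw [ff, if_neg]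
  rw [enemy_iff]
  push_neg
  omega

lemma ff_nonneg_case (k : ℕ) (h : ℕ → ℝ) (u : ℕ → ℤ) (x y : ℕ) :
    ff k h u x y = h (y - x) ∨ ff k h u x y = 0 := by
  rw [ff]; split_ifs <;> simp

/-- splitting off the last column -/
lemma hostility_lastcol (n k : ℕ) (h : ℕ → ℝ) (u : ℕ → ℤ) (hn : 1 ≤ n) :
    Hostility n h (enemyList k) u
      = Hostility (n - 1) h (enemyList k) u + ∑ x ∈ Finset.Icc 1 (n - 1), ff k h u x n := by
  obtain ⟨m, rfl⟩ : ∃ m, n = m + 1 := ⟨n - 1, by omega⟩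
  simp only [Nat.add_sub_cancel]
  rw [hostility_eq, hostility_eq]
  rw [Finset.sum_Icc_succ_top (by omega : 1 ≤ m + 1)]
  have hrow : ∀ x ∈ Finset.Icc 1 m, (∑ y ∈ Finset.Icc x (m + 1), ff k h u x y)
      = (∑ y ∈ Finset.Icc x m, ff k h u x y) + ff k h u x (m + 1) := by
    intro x hx
    rw [Finset.sum_Icc_succ_top]
    simp only [Finset.mem_Icc] at hx
    omega
  rw [Finset.sum_congr rfl hrow, Finset.sum_add_distrib]
  have : ∑ y ∈ Finset.Icc (m + 1) (m + 1), ff k h u (m + 1) y = 0 := by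
    simp [ff_diag]
  rw [this]
  ring

/-- greedy bound: sum of a monotone function over a set dominates sum over initial segment -/
lemma greedy (g : ℕ → ℝ) (N : ℕ) (hg : ∀ a b, 1 ≤ a → a ≤ b → b ≤ N → g a ≤ g b) :
    ∀ (c : ℕ) (S : Finset ℕ), S ⊆ Finset.Icc 1 N → S.card = c →
      ∑ i ∈ Finset.Icc 1 c, g i ≤ ∑ x ∈ S, g x := by
  intro c
  induction c with
  | zero =>
    intro S hS hc
    simp only [Finset.card_eq_zero] at hc
    subst hc
    simp
  | succ c ih =>
    intro S hS hc
    have hne : S.Nonempty := by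
      rw [← Finset.card_pos, hc]; omega
    set m := S.max' hne with hm
    have hmS : m ∈ S := S.max'_mem hne
    have hmN : m ≤ N := by
      have := hS hmS; simp only [Finset.mem_Icc] at this; omega
    have hsub : S ⊆ Finset.Icc 1 m := by
      intro x hx
      have h1 := hS hx
      simp only [Finset.mem_Icc] at h1 ⊢
      exact ⟨h1.1, S.le_max' x hx⟩
    have hcm : c + 1 ≤ m := by
      have := Finset.card_le_card hsub
      rw [hc, Nat.card_Icc] at this
      omega
    have hS' : S.erase m ⊆ Finset.Icc 1 N := fun x hx => hS (Finset.erase_subset _ _ hx)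
    have hc' : (S.erase m).card = c := by
      rw [Finset.card_erase_of_mem hmS, hc]
      omega
    have hIH := ih (S.erase m) hS' hc'
    rw [← Finset.add_sum_erase S g hmS]
    rw [Finset.sum_Icc_succ_top (by omega : 1 ≤ c + 1)]
    have : g (c + 1) ≤ g m := hg (c + 1) m (by omega) hcm hmN
    linarith

/-- telescoping over Icc -/
lemma tel (g : ℕ → ℝ) (a b : ℕ) (hab : a ≤ b + 1) :
    ∑ y ∈ Finset.Icc a b, (g y - g (y + 1)) = g a - g (b + 1) := by
  induction b with
  | zero =>
    interval_cases a
    · simp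
    · simp
  | succ b ih =>
    rcases Nat.lt_or_ge a (b + 2) with hlt | hge
    · rw [Finset.sum_Icc_succ_top (by omega : a ≤ b + 1), ih (by omega)]
      ring
    · have : Finset.Icc a (b + 1) = ∅ := by
        rw [Finset.Icc_eq_empty_iff]; omega
      have ha : a = b + 2 := by omega
      rw [this, ha]
      simp

lemma tel' (g : ℕ → ℝ) (a b : ℕ) (hab : a ≤ b + 1) :
    ∑ x ∈ Finset.Icc a b, (g (x + 1) - g x) = g (b + 1) - g a := by
  have := tel g a b hab
  have h2 : ∑ x ∈ Finset.Icc a b, (g (x + 1) - g x)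
      = - ∑ x ∈ Finset.Icc a b, (g x - g (x + 1)) := by
    rw [← Finset.sum_neg_distrib]
    apply Finset.sum_congr rfl
    intro x _; ring
  rw [h2, this]
  ring

/-- index insertion map -/
def iot (p x : ℕ) : ℕ := if x < p then x else x + 1
/-- index deletion map -/
def kap (p y : ℕ) : ℕ := if y < p then y else y - 1

lemma decomp (F : ℕ → ℕ → ℝ) (n p : ℕ) (hp1 : 1 ≤ p) (hpn : p ≤ n) (hFpp : F p p = 0) :
    ∑ x ∈ Finset.Icc 1 n, ∑ y ∈ Finset.Icc x n, F x y
      = (∑ x ∈ Finset.Icc 1 (n - 1), ∑ y ∈ Finset.Icc x (n - 1), F (iot p x) (iot p y))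
        + ∑ x ∈ Finset.Icc 1 (p - 1), F x p + ∑ y ∈ Finset.Icc (p + 1) n, F p y := by
  have hpmem : p ∈ Finset.Icc 1 n := by simp [Finset.mem_Icc]; omega
  -- step 1 : peel off row p
  rw [← Finset.add_sum_erase _ _ hpmem]
  -- step 2 : row p
  have hrowp : ∑ y ∈ Finset.Icc p n, F p y = ∑ y ∈ Finset.Icc (p + 1) n, F p y := by
    rw [← Finset.add_sum_erase _ _ (by simp [Finset.mem_Icc]; omega : p ∈ Finset.Icc p n),
      hFpp, Finset.Icc_erase_left, zero_add, ← Finset.Icc_add_one_left_eq_Ioc]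
  rw [hrowp]
  -- step 3 : each remaining row splits
  have hrow : ∀ x ∈ (Finset.Icc 1 n).erase p,
      ∑ y ∈ Finset.Icc x n, F x y
        = (∑ y ∈ (Finset.Icc x n).erase p, F x y) + (if x < p then F x p else 0) := by
    intro x hx
    simp only [Finset.mem_erase, Finset.mem_Icc] at hx
    by_cases hxp : x < p
    · rw [if_pos hxp, ← Finset.add_sum_erase _ _ (by simp [Finset.mem_Icc]; omega :
        p ∈ Finset.Icc x n)]
      ring
    · rw [if_neg hxp, Finset.erase_eq_of_notMem (by simp [Finset.mem_Icc]; omega), add_zero]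
  rw [Finset.sum_congr rfl hrow, Finset.sum_add_distrib]
  -- step 4 : collected p-column
  have hcol : ∑ x ∈ (Finset.Icc 1 n).erase p, (if x < p then F x p else 0)
      = ∑ x ∈ Finset.Icc 1 (p - 1), F x p := by
    rw [← Finset.sum_filter]
    apply Finset.sum_congr _ (fun _ _ => rfl)
    ext x
    simp only [Finset.mem_filter, Finset.mem_erase, Finset.mem_Icc]
    omega
  rw [hcol]
  -- step 5 : the main double sum reindex
  have hmain : ∑ x ∈ Finset.Icc 1 (n - 1), ∑ y ∈ Finset.Icc x (n - 1), F (iot p x) (iot p y)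
      = ∑ x ∈ (Finset.Icc 1 n).erase p, ∑ y ∈ (Finset.Icc x n).erase p, F x y := by
    apply Finset.sum_nbij' (iot p) (kap p)
    · intro a ha
      simp only [Finset.mem_Icc] at ha
      simp only [iot, Finset.mem_erase, Finset.mem_Icc]
      split_ifs <;> omega
    · intro a ha
      simp only [Finset.mem_erase, Finset.mem_Icc] at ha
      simp only [kap, Finset.mem_Icc]
      split_ifs <;> omega
    · intro a ha
      simp only [Finset.mem_Icc] at ha
      simp only [iot, kap]
      split_ifs <;> omega
    · intro a ha
      simp only [Finset.mem_erase, Finset.mem_Icc] at ha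
      simp only [iot, kap]
      split_ifs <;> omega
    · intro a ha
      simp only [Finset.mem_Icc] at ha
      apply Finset.sum_nbij' (iot p) (kap p)
      · intro b hb
        simp only [Finset.mem_Icc] at hb
        simp only [iot, Finset.mem_erase, Finset.mem_Icc]
        split_ifs <;> omega
      · intro b hb
        simp only [iot, Finset.mem_erase, Finset.mem_Icc] at hb
        simp only [kap, Finset.mem_Icc]
        split_ifs at hb ⊢ <;> omega
      · intro b hb
        simp only [Finset.mem_Icc] at hb
        simp only [iot, kap]
        split_ifs <;> omega
      · intro b hb
        simp only [Finset.mem_erase, Finset.mem_Icc] at hb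
        simp only [iot, kap]
        split_ifs <;> omega
      · intro b hb
        rfl
  rw [hmain]
  ring

def tt (h : ℕ → ℝ) (x y : ℕ) : ℝ := h (y - x) - h (y + 1 - x)

open Classical in
def ss (k : ℕ) (h : ℕ → ℝ) (v : ℕ → ℤ) (p x y : ℕ) : ℝ :=
  if x < p ∧ p ≤ y ∧ (v x, v (y + 1)) ∈ enemyList k then tt h x y else 0

/-- the number of enemies of the last dinosaur -/
def Dd (k n : ℕ) (u : ℕ → ℤ) : ℕ :=
  cnt n u (u n - k - 1) + (n - cnt n u (u n + k))

lemma key (k n : ℕ) (h : ℕ → ℝ) (hmono : ∀ i j, i ≤ j → j ≤ n - 1 → h j ≤ h i)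
    (hn : 1 ≤ n) (u : ℕ → ℤ) :
    Hostility n h (enemyList k) (Mrearr n u)
      ≤ Hostility (n - 1) h (enemyList k) (Mrearr (n - 1) u)
        + ∑ i ∈ Finset.Icc 1 (Dd k n u), h (n - i) := by
  set v := Mrearr n u with hv
  set w := u n with hw
  set p := prank n u with hp
  set L := cnt n u (w - k - 1) with hL
  set c2 := cnt n u (w + k) with hc2
  have hk0 : (0 : ℤ) ≤ (k : ℤ) := Int.natCast_nonneg k
  have hp1 : 1 ≤ p := prank_pos hn
  have hpn : p ≤ n := prank_le hn
  have hvp : v p = w := Mrearr_prank hn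
  have hLp : L + 1 ≤ p := by
    have := cnt_lt_prank (u := u) hn (j := w - k - 1) (by omega)
    omega
  have hpc2 : p ≤ c2 := cnt_mono n u (by omega)
  have hc2n : c2 ≤ n := cnt_le n u _
  have hDd : Dd k n u = L + (n - c2) := rfl
  have hlow : ∀ x, 1 ≤ x → x ≤ n → (v x ≤ w - k - 1 ↔ x ≤ L) := by
    intro x hx1 hxn
    exact Mrearr_le_iff n u hx1 hxn (w - k - 1)
  have hhigh : ∀ y, 1 ≤ y → y ≤ n → (w + k + 1 ≤ v y ↔ c2 + 1 ≤ y) := by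
    intro y hy1 hyn
    have h2 : v y ≤ w + k ↔ y ≤ c2 := Mrearr_le_iff n u hy1 hyn (w + k)
    constructor
    · intro hh
      by_contra hc
      have : v y ≤ w + k := h2.2 (by omega)
      omega
    · intro hh
      by_contra hc
      have : y ≤ c2 := h2.1 (by omega)
      omega
  have hmonoV : ∀ x y, 1 ≤ x → x ≤ y → y ≤ n → v x ≤ v y := by
    intro x y hx1 hxy hyn
    exact Mrearr_mono n u hx1 hxy hyn
  have hagree : ∀ x, 1 ≤ x → x ≤ n - 1 → Mrearr (n - 1) u x = v (iot p x) := by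
    intro x hx1 hxn
    by_cases hxp : x < p
    · rw [iot, if_pos hxp]
      exact Mrearr_pred_lt hn hx1 hxp
    · rw [iot, if_neg hxp]
      exact Mrearr_pred_ge hn (by omega) hxn
  -- A: decomposition of the hostility of v
  have hA : Hostility n h (enemyList k) v
      = (∑ x ∈ Finset.Icc 1 (n - 1), ∑ y ∈ Finset.Icc x (n - 1), ff k h v (iot p x) (iot p y))
        + (∑ x ∈ Finset.Icc 1 (p - 1), ff k h v x p)
        + (∑ y ∈ Finset.Icc (p + 1) n, ff k h v p y) := by
    rw [hostility_eq]
    exact decomp (ff k h v) n p hp1 hpn (ff_diag k h v p)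
  -- B/C: main part versus smaller hostility
  have hC : (∑ x ∈ Finset.Icc 1 (n - 1), ∑ y ∈ Finset.Icc x (n - 1), ff k h v (iot p x) (iot p y))
      = Hostility (n - 1) h (enemyList k) (Mrearr (n - 1) u)
        - ∑ x ∈ Finset.Icc 1 (n - 1), ∑ y ∈ Finset.Icc x (n - 1), ss k h v p x y := by
    rw [hostility_eq, ← Finset.sum_sub_distrib]
    apply Finset.sum_congr rfl
    intro x hx
    rw [← Finset.sum_sub_distrib]
    apply Finset.sum_congr rfl
    intro y hy
    simp only [Finset.mem_Icc] at hx hy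
    simp only [ff, ss, tt]
    rw [hagree x hx.1 hx.2, hagree y (by omega) hy.2]
    by_cases hxp : x < p
    · by_cases hyp : p ≤ y
      · rw [show iot p x = x from by rw [iot]; exact if_pos hxp,
          show iot p y = y + 1 from by rw [iot]; exact if_neg (by omega)]
        by_cases hEn : (v x, v (y + 1)) ∈ enemyList k
        · rw [if_pos hEn, if_pos hEn, if_pos ⟨hxp, hyp, hEn⟩]
          ring
        · rw [if_neg hEn, if_neg hEn, if_neg (show ¬(x < p ∧ p ≤ y ∧ (v x, v (y + 1)) ∈ enemyList k) from fun hcon => hEn hcon.2.2)]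
          ring
      · rw [show iot p x = x from by rw [iot]; exact if_pos hxp,
          show iot p y = y from by rw [iot]; exact if_pos (by omega),
          if_neg (show ¬(x < p ∧ p ≤ y ∧ (v x, v (y + 1)) ∈ enemyList k) from fun hcon => hyp hcon.2.1)]
        ring
    · rw [show iot p x = x + 1 from by rw [iot]; exact if_neg hxp,
        show iot p y = y + 1 from by rw [iot]; exact if_neg (by omega),
        if_neg (show ¬(x < p ∧ p ≤ y ∧ (v x, v (y + 1)) ∈ enemyList k) from fun hcon => hxp hcon.1),
        show y + 1 - (x + 1) = y - x from by omega]
      ring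
  -- D: support of the straddle sum
  have hD : (∑ x ∈ Finset.Icc 1 (n - 1), ∑ y ∈ Finset.Icc x (n - 1), ss k h v p x y)
      = ∑ x ∈ Finset.Icc 1 (p - 1), ∑ y ∈ Finset.Icc p (n - 1), ss k h v p x y := by
    have step1 : ∀ x ∈ Finset.Icc 1 (p - 1),
        (∑ y ∈ Finset.Icc x (n - 1), ss k h v p x y)
          = ∑ y ∈ Finset.Icc p (n - 1), ss k h v p x y := by
      intro x hx
      simp only [Finset.mem_Icc] at hx
      refine (Finset.sum_subset (fun y hy => ?_) (fun y hy hy' => ?_)).symm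
      · simp only [Finset.mem_Icc] at hy ⊢
        omega
      · simp only [Finset.mem_Icc] at hy hy'
        rw [ss, if_neg]
        rintro ⟨-, h2, -⟩
        omega
    rw [← Finset.sum_congr rfl step1]
    refine (Finset.sum_subset (fun x hx => ?_) (fun x hx hx' => ?_)).symm
    · simp only [Finset.mem_Icc] at hx ⊢
      omega
    · simp only [Finset.mem_Icc] at hx hx'
      refine Finset.sum_eq_zero (fun y hy => ?_)
      rw [ss, if_neg]
      rintro ⟨h1, -, -⟩
      omega
  -- E: the p-column
  have hE : (∑ x ∈ Finset.Icc 1 (p - 1), ff k h v x p) = ∑ x ∈ Finset.Icc 1 L, h (p - x) := by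
    have hpt : ∀ x ∈ Finset.Icc 1 (p - 1), ff k h v x p = if x ≤ L then h (p - x) else 0 := by
      intro x hx
      simp only [Finset.mem_Icc] at hx
      have hvx : v x ≤ w := by
        rw [← hvp]
        exact hmonoV x p hx.1 (by omega) hpn
      rw [ff]
      by_cases hxL : x ≤ L
      · rw [if_pos hxL, if_pos]
        rw [enemy_iff, hvp]
        have : v x ≤ w - k - 1 := (hlow x hx.1 (by omega)).2 hxL
        omega
      · rw [if_neg hxL, if_neg]
        rw [enemy_iff, hvp]
        have : ¬ (v x ≤ w - k - 1) := fun hcc => hxL ((hlow x hx.1 (by omega)).1 hcc)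
        omega
    rw [Finset.sum_congr rfl hpt, ← Finset.sum_filter]
    apply Finset.sum_congr _ (fun _ _ => rfl)
    ext x
    simp only [Finset.mem_filter, Finset.mem_Icc]
    omega
  -- F: the p-row
  have hF : (∑ y ∈ Finset.Icc (p + 1) n, ff k h v p y)
      = ∑ y ∈ Finset.Icc (c2 + 1) n, h (y - p) := by
    have hpt : ∀ y ∈ Finset.Icc (p + 1) n, ff k h v p y = if c2 + 1 ≤ y then h (y - p) else 0 := by
      intro y hy
      simp only [Finset.mem_Icc] at hy
      have hvy : w ≤ v y := by
        rw [← hvp]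
        exact hmonoV p y hp1 (by omega) hy.2
      rw [ff]
      by_cases hyR : c2 + 1 ≤ y
      · rw [if_pos hyR, if_pos]
        rw [enemy_iff, hvp]
        have : w + k + 1 ≤ v y := (hhigh y (by omega) hy.2).2 hyR
        omega
      · rw [if_neg hyR, if_neg]
        rw [enemy_iff, hvp]
        have : ¬ (w + k + 1 ≤ v y) := fun hcc => hyR ((hhigh y (by omega) hy.2).1 hcc)
        omega
    rw [Finset.sum_congr rfl hpt, ← Finset.sum_filter]
    apply Finset.sum_congr _ (fun _ _ => rfl)
    ext y
    simp only [Finset.mem_filter, Finset.mem_Icc]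
    omega
  -- G: telescope for the column
  have hG : (∑ x ∈ Finset.Icc 1 L, h (p - x))
      = (∑ x ∈ Finset.Icc 1 L, h (n - x))
        + ∑ x ∈ Finset.Icc 1 L, ∑ y ∈ Finset.Icc p (n - 1), tt h x y := by
    rw [← Finset.sum_add_distrib]
    apply Finset.sum_congr rfl
    intro x hx
    simp only [Finset.mem_Icc] at hx
    have htl := tel (fun y => h (y - x)) p (n - 1) (by omega)
    rw [show n - 1 + 1 = n from by omega] at htl
    have e1 : ∀ y ∈ Finset.Icc p (n - 1), h (y - x) - h (y + 1 - x) = tt h x y := by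
      intro y hy
      rw [tt]
    rw [Finset.sum_congr rfl e1] at htl
    linarith
  -- H: telescope for the row
  have hH : (∑ y ∈ Finset.Icc (c2 + 1) n, h (y - p))
      = (∑ y ∈ Finset.Icc c2 (n - 1), h (y - L))
        + ∑ x ∈ Finset.Icc (L + 1) (p - 1), ∑ y ∈ Finset.Icc c2 (n - 1), tt h x y := by
    have hre : (∑ y ∈ Finset.Icc (c2 + 1) n, h (y - p))
        = ∑ y ∈ Finset.Icc c2 (n - 1), h (y + 1 - p) := by
      apply Finset.sum_nbij' (fun y => y - 1) (fun y => y + 1)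
      · intro a ha
        simp only [Finset.mem_Icc] at ha ⊢
        omega
      · intro a ha
        simp only [Finset.mem_Icc] at ha ⊢
        omega
      · intro a ha
        simp only [Finset.mem_Icc] at ha
        omega
      · intro a ha
        simp only [Finset.mem_Icc] at ha
        omega
      · intro a ha
        simp only [Finset.mem_Icc] at ha
        exact congrArg h (by omega)
    have hpt : ∀ y ∈ Finset.Icc c2 (n - 1),
        h (y + 1 - p) = h (y - L) + ∑ x ∈ Finset.Icc (L + 1) (p - 1), tt h x y := by
      intro y hy
      simp only [Finset.mem_Icc] at hy
      have htl := tel' (fun x => h (y + 1 - x)) (L + 1) (p - 1) (by omega)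
      rw [show p - 1 + 1 = p from by omega] at htl
      have e1 : ∀ x ∈ Finset.Icc (L + 1) (p - 1), h (y + 1 - (x + 1)) - h (y + 1 - x) = tt h x y := by
        intro x hx
        simp only [Finset.mem_Icc] at hx
        rw [tt, show y + 1 - (x + 1) = y - x from by omega]
      rw [Finset.sum_congr rfl e1] at htl
      rw [show y + 1 - (L + 1) = y - L from by omega] at htl
      linarith
    rw [hre, Finset.sum_congr rfl hpt, Finset.sum_add_distrib]
    congr 1
    exact Finset.sum_comm
  -- I: reindex
  have hI : (∑ y ∈ Finset.Icc c2 (n - 1), h (y - L))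
      = ∑ i ∈ Finset.Icc (L + 1) (Dd k n u), h (n - i) := by
    rw [hDd]
    apply Finset.sum_nbij' (fun y => n + L - y) (fun i => n + L - i)
    · intro a ha
      simp only [Finset.mem_Icc] at ha ⊢
      omega
    · intro a ha
      simp only [Finset.mem_Icc] at ha ⊢
      omega
    · intro a ha
      simp only [Finset.mem_Icc] at ha
      omega
    · intro a ha
      simp only [Finset.mem_Icc] at ha
      omega
    · intro a ha
      simp only [Finset.mem_Icc] at ha
      exact congrArg h (by omega)
  -- J: join
  have hJ : (∑ x ∈ Finset.Icc 1 L, h (n - x)) + (∑ i ∈ Finset.Icc (L + 1) (Dd k n u), h (n - i))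
      = ∑ i ∈ Finset.Icc 1 (Dd k n u), h (n - i) := by
    rw [show Finset.Icc 1 L = Finset.Ioc 0 L from Finset.Icc_add_one_left_eq_Ioc 0 L,
      show Finset.Icc (L + 1) (Dd k n u) = Finset.Ioc L (Dd k n u) from Finset.Icc_add_one_left_eq_Ioc L _,
      show Finset.Icc 1 (Dd k n u) = Finset.Ioc 0 (Dd k n u) from Finset.Icc_add_one_left_eq_Ioc 0 _]
    exact Finset.sum_Ioc_consecutive _ (Nat.zero_le L) (by rw [hDd]; omega)
  -- K: first family realises its straddle credit
  have hK : (∑ x ∈ Finset.Icc 1 L, ∑ y ∈ Finset.Icc p (n - 1), tt h x y)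
      = ∑ x ∈ Finset.Icc 1 L, ∑ y ∈ Finset.Icc p (n - 1), ss k h v p x y := by
    apply Finset.sum_congr rfl
    intro x hx
    apply Finset.sum_congr rfl
    intro y hy
    simp only [Finset.mem_Icc] at hx hy
    rw [ss, if_pos]
    refine ⟨by omega, hy.1, ?_⟩
    rw [enemy_iff]
    have h1 : v x ≤ w - k - 1 := (hlow x hx.1 (by omega)).2 hx.2
    have h2 : w ≤ v (y + 1) := by
      rw [← hvp]
      exact hmonoV p (y + 1) hp1 (by omega) (by omega)
    omega
  -- L: second family
  have hLm : (∑ x ∈ Finset.Icc (L + 1) (p - 1), ∑ y ∈ Finset.Icc c2 (n - 1), tt h x y)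
      ≤ ∑ x ∈ Finset.Icc (L + 1) (p - 1), ∑ y ∈ Finset.Icc p (n - 1), ss k h v p x y := by
    apply Finset.sum_le_sum
    intro x hx
    simp only [Finset.mem_Icc] at hx
    have e1 : ∀ y ∈ Finset.Icc c2 (n - 1), tt h x y = ss k h v p x y := by
      intro y hy
      simp only [Finset.mem_Icc] at hy
      rw [ss, if_pos]
      refine ⟨by omega, by omega, ?_⟩
      rw [enemy_iff]
      have h1 : v x ≤ w := by
        rw [← hvp]
        exact hmonoV x p (by omega) (by omega) hpn
      have h2 : w + k + 1 ≤ v (y + 1) := (hhigh (y + 1) (by omega) (by omega)).2 (by omega)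
      omega
    rw [Finset.sum_congr rfl e1]
    apply Finset.sum_le_sum_of_subset_of_nonneg
    · intro y hy
      simp only [Finset.mem_Icc] at hy ⊢
      omega
    · intro y hy hy'
      rw [ss]
      split_ifs with hcond
      · rw [tt]
        simp only [Finset.mem_Icc] at hy
        have := hmono (y - x) (y + 1 - x) (by omega) (by omega)
        linarith
      · exact le_refl 0
  -- M: split of the straddle sum
  have hM : (∑ x ∈ Finset.Icc 1 (p - 1), ∑ y ∈ Finset.Icc p (n - 1), ss k h v p x y)
      = (∑ x ∈ Finset.Icc 1 L, ∑ y ∈ Finset.Icc p (n - 1), ss k h v p x y)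
        + ∑ x ∈ Finset.Icc (L + 1) (p - 1), ∑ y ∈ Finset.Icc p (n - 1), ss k h v p x y := by
    rw [show Finset.Icc 1 L = Finset.Ioc 0 L from Finset.Icc_add_one_left_eq_Ioc 0 L,
      show Finset.Icc (L + 1) (p - 1) = Finset.Ioc L (p - 1) from Finset.Icc_add_one_left_eq_Ioc L _,
      show Finset.Icc 1 (p - 1) = Finset.Ioc 0 (p - 1) from Finset.Icc_add_one_left_eq_Ioc 0 _]
    exact (Finset.sum_Ioc_consecutive _ (Nat.zero_le L) (by omega)).symm
  rw [hA, hC, hD, hE, hF, hG, hH, hI, hM]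
  rw [hK] at hG ⊢
  linarith [hLm, hJ]

lemma ucol (k n : ℕ) (h : ℕ → ℝ) (hmono : ∀ i j, i ≤ j → j ≤ n - 1 → h j ≤ h i)
    (hn : 1 ≤ n) (u : ℕ → ℤ) :
    (∑ i ∈ Finset.Icc 1 (Dd k n u), h (n - i)) ≤ ∑ x ∈ Finset.Icc 1 (n - 1), ff k h u x n := by
  classical
  have hk0 : (0 : ℤ) ≤ (k : ℤ) := Int.natCast_nonneg k
  set S := (Finset.Icc 1 (n - 1)).filter (fun x => (u x, u n) ∈ enemyList k) with hS
  have hsum : (∑ x ∈ Finset.Icc 1 (n - 1), ff k h u x n) = ∑ x ∈ S, h (n - x) := by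
    rw [hS, Finset.sum_filter]
    apply Finset.sum_congr rfl
    intro x _
    rw [ff]
  have hcard : S.card = Dd k n u := by
    have hiff : ∀ x, ((u x, u n) ∈ enemyList k)
        ↔ (u x ≤ u n - k - 1 ∨ u n + k + 1 ≤ u x) := by
      intro x
      rw [enemy_iff]
      omega
    have hSeq : S = (Finset.Icc 1 (n - 1)).filter (fun x => u x ≤ u n - k - 1)
        ∪ (Finset.Icc 1 (n - 1)).filter (fun x => u n + k + 1 ≤ u x) := by
      rw [hS, ← Finset.filter_or]
      apply Finset.filter_congr
      intro x _
      simp only [hiff x]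
    have hdisj : Disjoint ((Finset.Icc 1 (n - 1)).filter (fun x => u x ≤ u n - k - 1))
        ((Finset.Icc 1 (n - 1)).filter (fun x => u n + k + 1 ≤ u x)) := by
      apply Finset.disjoint_filter_filter'
      rw [disjoint_iff_inf_le]
      intro x hx
      simp only [Pi.inf_apply, inf_Prop_eq] at hx
      omega
    have hclow : ((Finset.Icc 1 (n - 1)).filter (fun x => u x ≤ u n - k - 1)).card
        = cnt n u (u n - k - 1) := by
      have := cnt_pred (u := u) hn (u n - k - 1)
      rw [if_neg (by omega)] at this
      rw [this]
      rfl
    have hchigh : ((Finset.Icc 1 (n - 1)).filter (fun x => u n + k + 1 ≤ u x)).card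
        = n - cnt n u (u n + k) := by
      have heqneg : (Finset.Icc 1 (n - 1)).filter (fun x => u n + k + 1 ≤ u x)
          = (Finset.Icc 1 (n - 1)).filter (fun x => ¬ (u x ≤ u n + k)) := by
        apply Finset.filter_congr
        intro x _
        constructor
        · intro hh; omega
        · intro hh; omega
      have hsplit := Finset.card_filter_add_card_filter_not
        (s := Finset.Icc 1 (n - 1)) (fun x => u x ≤ u n + k)
      have hc1 : ((Finset.Icc 1 (n - 1)).filter (fun x => u x ≤ u n + k)).card
          = cnt (n - 1) u (u n + k) := rfl
      have hc2 := cnt_pred (u := u) hn (u n + k)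
      rw [if_pos (by omega)] at hc2
      have hcI : (Finset.Icc 1 (n - 1)).card = n - 1 := by
        rw [Nat.card_Icc]
        omega
      rw [heqneg]
      have hple : 1 ≤ cnt n u (u n + k) := by
        have h1 : prank n u ≤ cnt n u (u n + k) := cnt_mono n u (by omega)
        have := prank_pos (u := u) hn
        omega
      omega
    rw [hSeq, Finset.card_union_of_disjoint hdisj, hclow, hchigh, Dd]
  rw [hsum, ← hcard]
  apply greedy (fun i => h (n - i)) (n - 1)
  · intro a b ha hab hbN
    exact hmono (n - b) (n - a) (by omega) (by omega)
  · rw [hS]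
    exact Finset.filter_subset _ _
  · rfl

lemma aux (k : ℕ) (h : ℕ → ℝ) :
    ∀ n, (∀ i j, i ≤ j → j ≤ n - 1 → h j ≤ h i) → ∀ u : ℕ → ℤ,
      Hostility n h (enemyList k) (Mrearr n u) ≤ Hostility n h (enemyList k) u := by
  intro n
  induction n with
  | zero =>
    intro _ u
    simp [Hostility]
  | succ m ih =>
    intro hmono u
    have hmono' : ∀ i j, i ≤ j → j ≤ m - 1 → h j ≤ h i :=
      fun i j hij hj => hmono i j hij (by omega)
    have h1 := key k (m + 1) h hmono (by omega) u
    have h2 := ucol k (m + 1) h hmono (by omega) u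
    have h3 := ih hmono' u
    have h4 := hostility_lastcol (m + 1) k h u (by omega)
    simp only [Nat.add_sub_cancel] at h1 h2 h4
    linarith

end DinoAux

/-- **Total hostility minimization, discrete setting** (Theorem 2.2): the nondecreasing
rearrangement minimizes the total hostility with respect to the enemy list `E_k`. -/
theorem hostility_minimization_discrete (n k : ℕ) (hn : 0 < n) (hk : 0 < k)
    (h : ℕ → ℝ) (hmono : ∀ i j, i ≤ j → j ≤ n - 1 → h j ≤ h i)
    (u : ℕ → ℤ) :
    Hostility n h (enemyList k) (Mrearr n u) ≤ Hostility n h (enemyList k) u :=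
  DinoAux.aux k h n hmono u
end
end

section
/- Let L and R be finite sets of positive integers, and let h : ℕ → ℝ be a nonincreasing function. Define the left-right gap G(L,R) := h(0) + Σ_{ℓ∈L} h(ℓ) + Σ_{r∈R} h(r) − Σ_{(ℓ,r)∈L×R} (h(ℓ+r−1) − h(ℓ+r)). Then G(L,R) ≤ Σ_{i=0}^{|L|+|R|} h(i), where |L| and |R| denote the number of elements of L and R. -/
private lemma tele_sum (h : ℕ → ℝ) (i N : ℕ) (hiN : i ≤ N) :
    ∑ k ∈ Finset.Ico i N, (h k - h (k+1)) = h i - h N := by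
  induction N, hiN using Nat.le_induction with
  | base => simp
  | succ N hiN ih => rw [Finset.sum_Ico_succ_top hiN, ih]; ring

private lemma cum_sum (h : ℕ → ℝ) (S : Finset ℕ) (N : ℕ) (hS : ∀ x ∈ S, x ≤ N) :
    ∑ x ∈ S, h x
      = (S.card : ℝ) * h N
        + ∑ k ∈ Finset.range N,
            ((S.filter (fun x => x ≤ k)).card : ℝ) * (h k - h (k+1)) := by
  have h1 : ∀ x ∈ S, h x = h N + ∑ k ∈ Finset.Ico x N, (h k - h (k+1)) := by
    intro x hx; rw [tele_sum h x N (hS x hx)]; ring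
  rw [Finset.sum_congr rfl h1, Finset.sum_add_distrib, Finset.sum_const, nsmul_eq_mul]
  congr 1
  have h2 : ∀ x ∈ S, ∑ k ∈ Finset.Ico x N, (h k - h (k+1))
      = ∑ k ∈ Finset.range N, if x ≤ k then (h k - h (k+1)) else 0 := by
    intro x _
    rw [← Finset.sum_filter]
    congr 1
    ext k
    simp [Finset.mem_Ico, and_comm]
  rw [Finset.sum_congr rfl h2, Finset.sum_comm]
  refine Finset.sum_congr rfl fun k _ => ?_
  rw [← Finset.sum_filter, Finset.sum_const, nsmul_eq_mul]

private lemma count_sum {α : Type*} [DecidableEq α] (S : Finset α) (g : α → ℕ) (N : ℕ)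
    (hg : ∀ x ∈ S, g x < N) (D : ℕ → ℝ) :
    ∑ x ∈ S, D (g x)
      = ∑ k ∈ Finset.range N, ((S.filter (fun x => g x = k)).card : ℝ) * D k := by
  have h1 : ∀ x ∈ S, D (g x) = ∑ k ∈ Finset.range N, if g x = k then D k else 0 := by
    intro x hx
    rw [Finset.sum_ite_eq (Finset.range N) (g x) D]
    simp [Finset.mem_range.mpr (hg x hx)]
  rw [Finset.sum_congr rfl h1, Finset.sum_comm]
  refine Finset.sum_congr rfl fun k _ => ?_
  rw [← Finset.sum_filter, Finset.sum_const, nsmul_eq_mul]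

private lemma count_ineq (L R : Finset ℕ) (hL : ∀ ℓ ∈ L, 0 < ℓ) (hR : ∀ r ∈ R, 0 < r)
    (k : ℕ) :
    ((insert 0 L).filter (fun x => x ≤ k)).card + (R.filter (fun x => x ≤ k)).card
      ≤ ((Finset.range (L.card + R.card + 1)).filter (fun x => x ≤ k)).card
        + ((L ×ˢ R).filter (fun p => p.1 + p.2 - 1 = k)).card := by
  have h0L : 0 ∉ L := fun h0 => absurd (hL 0 h0) (lt_irrefl 0)
  have hins : ((insert 0 L).filter (fun x => x ≤ k)).card
      = (L.filter (fun x => x ≤ k)).card + 1 := by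
    rw [Finset.filter_insert, if_pos (Nat.zero_le k),
      Finset.card_insert_of_notMem (fun hmem => h0L (Finset.mem_of_mem_filter 0 hmem))]
  have hT : ((Finset.range (L.card + R.card + 1)).filter (fun x => x ≤ k)).card
      = min (k+1) (L.card + R.card + 1) := by
    have : (Finset.range (L.card + R.card + 1)).filter (fun x => x ≤ k)
        = Finset.range (min (k+1) (L.card + R.card + 1)) := by
      ext x; simp [Finset.mem_filter, Finset.mem_range, Nat.lt_min]; omega
    rw [this, Finset.card_range]
  rw [hins, hT]
  rcases le_or_gt (L.card + R.card) k with hk | hk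
  · have ha : (L.filter (fun x => x ≤ k)).card ≤ L.card := Finset.card_filter_le _ _
    have hb : (R.filter (fun x => x ≤ k)).card ≤ R.card := Finset.card_filter_le _ _
    omega
  · -- min = k+1; need a + b ≤ k + s
    have hmin : min (k+1) (L.card + R.card + 1) = k + 1 := by omega
    rw [hmin]
    set A := L.filter (fun x => x ≤ k) with hA
    set B0 := R.filter (fun x => x ≤ k) with hB0
    set B := B0.image (fun r => k + 1 - r) with hB
    have hBcard : B.card = B0.card := by
      apply Finset.card_image_of_injOn
      intro r1 hr1 r2 hr2 heq
      simp only [hB0, Finset.coe_filter, Set.mem_setOf_eq] at hr1 hr2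
      have heq' : k + 1 - r1 = k + 1 - r2 := by simpa using heq
      omega
    have hsub : A ∪ B ⊆ Finset.Icc 1 k := by
      intro x hx
      rcases Finset.mem_union.mp hx with hx | hx
      · simp only [hA, Finset.mem_filter] at hx
        exact Finset.mem_Icc.mpr ⟨hL x hx.1, hx.2⟩
      · simp only [hB, Finset.mem_image] at hx
        obtain ⟨r, hr, hrx⟩ := hx
        simp only [hB0, Finset.mem_filter] at hr
        have := hR r hr.1
        apply Finset.mem_Icc.mpr
        omega
    have hinter : (A ∩ B).card ≤ ((L ×ˢ R).filter (fun p => p.1 + p.2 - 1 = k)).card := by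
      apply Finset.card_le_card_of_injOn (fun x => (x, k + 1 - x))
      · intro x hx
        rw [Finset.mem_coe, Finset.mem_inter] at hx
        obtain ⟨hxA, hxB⟩ := hx
        simp only [hA, Finset.mem_filter] at hxA
        simp only [hB, Finset.mem_image] at hxB
        obtain ⟨r, hr, hrx⟩ := hxB
        simp only [hB0, Finset.mem_filter] at hr
        have hrpos := hR r hr.1
        have hxr : k + 1 - x = r := by omega
        simp only [Finset.mem_coe, Finset.mem_filter, Finset.mem_product]
        refine ⟨⟨hxA.1, hxr ▸ hr.1⟩, ?_⟩
        have := hL x hxA.1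
        omega
      · intro x1 _ x2 _ heq
        exact (Prod.mk.injEq _ _ _ _ ▸ heq).1
    have hAB : A.card + B.card = (A ∪ B).card + (A ∩ B).card :=
      (Finset.card_union_add_card_inter A B).symm
    have hUnion : (A ∪ B).card ≤ k := by
      calc (A ∪ B).card ≤ (Finset.Icc 1 k).card := Finset.card_le_card hsub
        _ = k := by rw [Nat.card_Icc]; omega
    omega

/-- **Left-right gap inequality** (inequality (2.4)): for finite sets `L`, `R` of positive
integers and a nonincreasing `h : ℕ → ℝ`,
`G(L,R) = h 0 + Σ_{ℓ∈L} h ℓ + Σ_{r∈R} h r − Σ_{(ℓ,r)∈L×R} (h (ℓ+r−1) − h (ℓ+r))`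
is at most `Σ_{i=0}^{|L|+|R|} h i`. -/
theorem leftRightGap_le (L R : Finset ℕ) (hL : ∀ ℓ ∈ L, 0 < ℓ) (hR : ∀ r ∈ R, 0 < r)
    (h : ℕ → ℝ) (hmono : ∀ i j : ℕ, i ≤ j → h j ≤ h i) :
    h 0 + (∑ ℓ ∈ L, h ℓ) + (∑ r ∈ R, h r)
        - ∑ ℓ ∈ L, ∑ r ∈ R, (h (ℓ + r - 1) - h (ℓ + r))
      ≤ ∑ i ∈ Finset.range (L.card + R.card + 1), h i := by
  classical
  set N := L.sup id + R.sup id + (L.card + R.card) + 1 with hN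
  have h0L : 0 ∉ L := fun h0 => absurd (hL 0 h0) (lt_irrefl 0)
  have hLle : ∀ ℓ ∈ L, ℓ ≤ N := fun ℓ hℓ => by
    have : ℓ ≤ L.sup id := Finset.le_sup (f := id) hℓ
    omega
  have hRle : ∀ r ∈ R, r ≤ N := fun r hr => by
    have : r ≤ R.sup id := Finset.le_sup (f := id) hr
    omega
  -- step 1: h 0 + ∑ L = ∑ over insert 0 L
  have hstep1 : h 0 + (∑ ℓ ∈ L, h ℓ) = ∑ x ∈ insert 0 L, h x :=
    (Finset.sum_insert h0L).symm
  -- step 2: double sum as sum over product of D (ℓ+r-1)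
  have hstep2 : (∑ ℓ ∈ L, ∑ r ∈ R, (h (ℓ + r - 1) - h (ℓ + r)))
      = ∑ p ∈ L ×ˢ R, (h (p.1 + p.2 - 1) - h ((p.1 + p.2 - 1) + 1)) := by
    rw [Finset.sum_product]
    refine Finset.sum_congr rfl fun ℓ hℓ => Finset.sum_congr rfl fun r hr => ?_
    have := hL ℓ hℓ
    have hkl : ℓ + r - 1 + 1 = ℓ + r := by omega
    rw [hkl]
  rw [hstep1, hstep2]
  rw [cum_sum h (insert 0 L) N (by
    intro x hx
    rcases Finset.mem_insert.mp hx with rfl | hx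
    · omega
    · exact hLle x hx)]
  rw [cum_sum h R N hRle]
  rw [cum_sum h (Finset.range (L.card + R.card + 1)) N (by
    intro x hx
    have := Finset.mem_range.mp hx
    omega)]
  rw [count_sum (L ×ˢ R) (fun p => p.1 + p.2 - 1) N (by
    intro p hp
    rw [Finset.mem_product] at hp
    have h1 := hLle p.1 hp.1
    have h2 := hRle p.2 hp.2
    have h3 := hL p.1 hp.1
    have h4 := hL p.1 hp.1
    have h5 : p.1 ≤ L.sup id := Finset.le_sup (f := id) hp.1
    have h6 : p.2 ≤ R.sup id := Finset.le_sup (f := id) hp.2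
    show p.1 + p.2 - 1 < N
    omega) (fun k => h k - h (k+1))]
  have hcards : ((insert 0 L).card : ℝ) + (R.card : ℝ)
      = ((Finset.range (L.card + R.card + 1)).card : ℝ) := by
    rw [Finset.card_insert_of_notMem h0L, Finset.card_range]
    push_cast
    ring
  have hmain : (∑ k ∈ Finset.range N,
        (((insert 0 L).filter (fun x => x ≤ k)).card : ℝ) * (h k - h (k+1)))
      + (∑ k ∈ Finset.range N,
        ((R.filter (fun x => x ≤ k)).card : ℝ) * (h k - h (k+1)))
      ≤ (∑ k ∈ Finset.range N,
        (((Finset.range (L.card + R.card + 1)).filter (fun x => x ≤ k)).card : ℝ)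
          * (h k - h (k+1)))
        + ∑ k ∈ Finset.range N,
        (((L ×ˢ R).filter (fun p => p.1 + p.2 - 1 = k)).card : ℝ) * (h k - h (k+1)) := by
    rw [← Finset.sum_add_distrib, ← Finset.sum_add_distrib]
    apply Finset.sum_le_sum
    intro k _
    rw [← add_mul, ← add_mul]
    apply mul_le_mul_of_nonneg_right
    · exact_mod_cast count_ineq L R hL hR k
    · exact sub_nonneg.mpr (hmono k (k+1) (Nat.le_succ k))
  have hc2 : ((insert 0 L).card : ℝ) * h N + (R.card : ℝ) * h N
      = ((Finset.range (L.card + R.card + 1)).card : ℝ) * h N := by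
    rw [← add_mul, hcards]
  linarith [hmain, hc2]
end

section
/- Let n ≥ 2 and k be positive integers, let E_k := {(i,j) ∈ ℤ² : |j−i| ≥ k+1}, let h : {0,1,…,n−1} → ℝ be a nonincreasing function, and let v : {1,…,n} → ℤ be any function. Then the hostility gap satisfies Δ(E_k,v) ≥ Δ(E_k,Mv), where Mv is the nondecreasing rearrangement of v. -/
noncomputable section

/-- `μ`: the maximum value of `v` on `{1,…,n}`. -/
def maxVal (n : ℕ) (v : ℕ → ℤ) : ℤ := sSup (v '' {i | 1 ≤ i ∧ i ≤ n})

/-- `m`: the largest index in `{1,…,n}` where `v` attains its maximum value. -/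
def maxIdx (n : ℕ) (v : ℕ → ℤ) : ℕ := sSup {i | 1 ≤ i ∧ i ≤ n ∧ v i = maxVal n v}

/-- The reduction `Rv` of `v`: the rightmost dinosaur of the highest species is removed and
all subsequent dinosaurs are shifted one position to the left. -/
def reduction (n : ℕ) (v : ℕ → ℤ) : ℕ → ℤ :=
  fun i => if i < maxIdx n v then v i else v (i + 1)

/-- The hostility gap `Δ(E,v) = H(h,E,v) − H(h,E,Rv)`. -/
def hostilityGap (n : ℕ) (h : ℕ → ℝ) (E : Set (ℤ × ℤ)) (v : ℕ → ℤ) : ℝ :=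
  Hostility n h E v - Hostility (n - 1) h E (reduction n v)


open Finset


lemma aux_Icc_split {M : Type*} [AddCommMonoid M] (g : ℕ → M) (a b c : ℕ)
    (h1 : a ≤ b) (hb : 1 ≤ b) (h2 : b ≤ c) :
    ∑ i ∈ Icc a c, g i = ((∑ i ∈ Icc a (b-1), g i) + g b) + ∑ i ∈ Icc (b+1) c, g i := by
  have hset : Icc a c = (Icc a (b-1) ∪ {b}) ∪ Icc (b+1) c := by
    ext i; simp only [mem_Icc, mem_union, mem_singleton]; omega
  have d1 : Disjoint (Icc a (b-1)) ({b} : Finset ℕ) := by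
    simp only [disjoint_left, mem_Icc, mem_singleton]; omega
  have d2 : Disjoint (Icc a (b-1) ∪ {b}) (Icc (b+1) c) := by
    simp only [disjoint_left, mem_Icc, mem_union, mem_singleton]; omega
  rw [hset, sum_union d2, sum_union d1, sum_singleton]

lemma aux_Icc_split2 {M : Type*} [AddCommMonoid M] (g : ℕ → M) (a b c : ℕ)
    (h1 : a ≤ b) (hb : 1 ≤ b) (h2 : b ≤ c + 1) :
    ∑ i ∈ Icc a c, g i = (∑ i ∈ Icc a (b-1), g i) + ∑ i ∈ Icc b c, g i := by
  have hset : Icc a c = Icc a (b-1) ∪ Icc b c := by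
    ext i; simp only [mem_Icc, mem_union]; omega
  have d1 : Disjoint (Icc a (b-1)) (Icc b c) := by
    simp only [disjoint_left, mem_Icc]; omega
  rw [hset, sum_union d1]

lemma aux_tele1 (g : ℕ → ℝ) (a : ℕ) : ∀ b, a ≤ b →
    ∑ y ∈ Icc (a+1) b, (g y - g (y-1)) = g b - g a := by
  refine Nat.le_induction ?_ ?_
  · rw [Finset.Icc_eq_empty (by omega)]; simp
  · intro b hb ih
    rw [Finset.sum_Icc_succ_top (by omega), ih]
    have : b + 1 - 1 = b := by omega
    rw [this]; ring

lemma aux_tele2 (g : ℕ → ℝ) (a : ℕ) : ∀ b, a ≤ b + 1 →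
    ∑ x ∈ Icc a b, (g x - g (x+1)) = g a - g (b+1) := by
  intro b
  induction b with
  | zero =>
    intro ha
    interval_cases a
    · simp
    · rw [Finset.Icc_eq_empty (by omega)]; simp
  | succ b ih =>
    intro ha
    by_cases hab : a ≤ b + 1
    · rw [Finset.sum_Icc_succ_top (by omega), ih hab]; ring
    · rw [Finset.Icc_eq_empty (by omega)]
      have : a = b + 2 := by omega
      rw [this]; simp

lemma aux_shift (g : ℕ → ℝ) (a b : ℕ) :
    ∑ y ∈ Icc (a+1) (b+1), g y = ∑ y ∈ Icc a b, g (y+1) := by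
  rw [← Finset.map_add_right_Icc a b 1, Finset.sum_map]
  rfl

lemma aux_tail (f : ℕ → ℝ) (a b : ℕ) :
    ∑ c ∈ Icc a b, f c = ∑ c ∈ Icc 0 b, if a ≤ c then f c else 0 := by
  rw [Finset.sum_ite, Finset.sum_const_zero, add_zero]
  apply Finset.sum_congr _ (fun _ _ => rfl)
  ext i; simp only [mem_Icc, mem_filter]; omega

lemma maxVal_ub (n : ℕ) (v : ℕ → ℤ) (i : ℕ) (h1 : 1 ≤ i) (h2 : i ≤ n) : v i ≤ maxVal n v := by
  apply le_csSup
  · apply Set.Finite.bddAbove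
    apply Set.Finite.image
    have : {i : ℕ | 1 ≤ i ∧ i ≤ n} = Set.Icc 1 n := by ext; simp [Set.mem_Icc]
    rw [this]; exact Set.finite_Icc _ _
  · exact ⟨i, ⟨h1, h2⟩, rfl⟩

lemma maxVal_mem (n : ℕ) (hn : 1 ≤ n) (v : ℕ → ℤ) :
    ∃ i, 1 ≤ i ∧ i ≤ n ∧ v i = maxVal n v := by
  have hfin : ({i : ℕ | 1 ≤ i ∧ i ≤ n}).Finite := by
    have : {i : ℕ | 1 ≤ i ∧ i ≤ n} = Set.Icc 1 n := by ext; simp [Set.mem_Icc]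
    rw [this]; exact Set.finite_Icc _ _
  have hne : (v '' {i : ℕ | 1 ≤ i ∧ i ≤ n}).Nonempty := ⟨v 1, 1, ⟨le_refl 1, hn⟩, rfl⟩
  obtain ⟨i, hi, hvi⟩ := hne.csSup_mem (hfin.image v)
  exact ⟨i, hi.1, hi.2, hvi⟩

lemma maxIdx_spec (n : ℕ) (hn : 1 ≤ n) (v : ℕ → ℤ) :
    1 ≤ maxIdx n v ∧ maxIdx n v ≤ n ∧ v (maxIdx n v) = maxVal n v := by
  obtain ⟨i, h1, h2, h3⟩ := maxVal_mem n hn v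
  have hne : {i : ℕ | 1 ≤ i ∧ i ≤ n ∧ v i = maxVal n v}.Nonempty := ⟨i, h1, h2, h3⟩
  have hbdd : BddAbove {i : ℕ | 1 ≤ i ∧ i ≤ n ∧ v i = maxVal n v} := ⟨n, fun j hj => hj.2.1⟩
  exact Nat.sSup_mem hne hbdd

lemma cnt_mono (n : ℕ) (v : ℕ → ℤ) {j j' : ℤ} (hj : j ≤ j') :
    ((Finset.Icc 1 n).filter (fun y => v y ≤ j)).card
      ≤ ((Finset.Icc 1 n).filter (fun y => v y ≤ j')).card := by
  apply Finset.card_le_card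
  exact Finset.monotone_filter_right _ (fun y _ hy => le_trans hy hj)

lemma mrearr_le_iff (n : ℕ) (hn : 1 ≤ n) (v : ℕ → ℤ) (x : ℕ) (j : ℤ)
    (hx1 : 1 ≤ x) (hxn : x ≤ n) :
    Mrearr n v x ≤ j ↔ x ≤ ((Finset.Icc 1 n).filter (fun y => v y ≤ j)).card := by
  set S : Set ℤ := {j : ℤ | x ≤ ((Finset.Icc 1 n).filter (fun y => v y ≤ j)).card} with hS
  have h1n : (1:ℕ) ∈ Finset.Icc 1 n := by simp [Finset.mem_Icc]; omega
  have hne : S.Nonempty := by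
    refine ⟨(Finset.Icc 1 n).sup' ⟨1, h1n⟩ v, ?_⟩
    have hfull : (Finset.Icc 1 n).filter
        (fun y => v y ≤ (Finset.Icc 1 n).sup' ⟨1, h1n⟩ v) = Finset.Icc 1 n :=
      Finset.filter_true_of_mem (fun y hy => Finset.le_sup' v hy)
    simp only [hS, Set.mem_setOf_eq, hfull, Nat.card_Icc]
    omega
  have hbdd : BddBelow S := by
    refine ⟨(Finset.Icc 1 n).inf' ⟨1, h1n⟩ v, ?_⟩
    intro j' hj'
    have hpos : 0 < ((Finset.Icc 1 n).filter (fun y => v y ≤ j')).card := lt_of_lt_of_le hx1 hj'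
    obtain ⟨y, hy⟩ := Finset.card_pos.mp hpos
    rw [Finset.mem_filter] at hy
    exact le_trans (Finset.inf'_le v hy.1) hy.2
  constructor
  · intro hle
    have hmem : sInf S ∈ S := Int.csInf_mem hne hbdd
    have : Mrearr n v x = sInf S := rfl
    rw [this] at hle
    exact le_trans hmem (cnt_mono n v hle)
  · intro hj
    exact csInf_le hbdd hj

lemma mrearr_mono (n : ℕ) (hn : 1 ≤ n) (v : ℕ → ℤ) (x x' : ℕ)
    (hx1 : 1 ≤ x) (hxx' : x ≤ x') (hx'n : x' ≤ n) : Mrearr n v x ≤ Mrearr n v x' := by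
  rw [mrearr_le_iff n hn v x _ hx1 (le_trans hxx' hx'n)]
  exact le_trans hxx'
    ((mrearr_le_iff n hn v x' (Mrearr n v x') (le_trans hx1 hxx') hx'n).mp le_rfl)

lemma mrearr_top (n : ℕ) (hn : 1 ≤ n) (v : ℕ → ℤ) : Mrearr n v n = maxVal n v := by
  apply le_antisymm
  · rw [mrearr_le_iff n hn v n _ hn le_rfl]
    have hfull : (Finset.Icc 1 n).filter (fun y => v y ≤ maxVal n v) = Finset.Icc 1 n := by
      apply Finset.filter_true_of_mem
      intro y hy
      rw [Finset.mem_Icc] at hy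
      exact maxVal_ub n v y hy.1 hy.2
    rw [hfull, Nat.card_Icc]; omega
  · have h := (mrearr_le_iff n hn v n (Mrearr n v n) hn le_rfl).mp le_rfl
    have hsub := Finset.filter_subset (fun y => v y ≤ Mrearr n v n) (Finset.Icc 1 n)
    have hcard : (Finset.Icc 1 n).card
        ≤ ((Finset.Icc 1 n).filter (fun y => v y ≤ Mrearr n v n)).card := by
      rw [Nat.card_Icc]; omega
    have heq := Finset.eq_of_subset_of_card_le hsub hcard
    obtain ⟨i, h1, h2, h3⟩ := maxVal_mem n hn v
    have : i ∈ (Finset.Icc 1 n).filter (fun y => v y ≤ Mrearr n v n) := by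
      rw [heq]; rw [Finset.mem_Icc]; exact ⟨h1, h2⟩
    rw [Finset.mem_filter] at this
    rw [← h3]; exact this.2

lemma maxVal_mrearr (n : ℕ) (hn : 1 ≤ n) (v : ℕ → ℤ) :
    maxVal n (Mrearr n v) = maxVal n v := by
  apply le_antisymm
  · show sSup (Mrearr n v '' {i | 1 ≤ i ∧ i ≤ n}) ≤ maxVal n v
    refine csSup_le ⟨Mrearr n v 1, 1, ⟨le_refl 1, hn⟩, rfl⟩ ?_
    rintro z ⟨i, ⟨hi1, hi2⟩, rfl⟩
    rw [← mrearr_top n hn v]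
    exact mrearr_mono n hn v i n hi1 hi2 le_rfl
  · rw [← mrearr_top n hn v]
    exact maxVal_ub n (Mrearr n v) n hn le_rfl

lemma maxIdx_mrearr (n : ℕ) (hn : 1 ≤ n) (v : ℕ → ℤ) : maxIdx n (Mrearr n v) = n := by
  have hnT : n ∈ {i : ℕ | 1 ≤ i ∧ i ≤ n ∧ Mrearr n v i = maxVal n (Mrearr n v)} := by
    refine ⟨hn, le_rfl, ?_⟩
    rw [mrearr_top n hn v, maxVal_mrearr n hn v]
  apply le_antisymm
  · exact csSup_le ⟨n, hnT⟩ (fun i hi => hi.2.1)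
  · exact le_csSup ⟨n, fun i hi => hi.2.1⟩ hnT
open Classical in
def ea (h : ℕ → ℝ) (E : Set (ℤ × ℤ)) (v : ℕ → ℤ) (x y : ℕ) : ℝ :=
  if (v x, v y) ∈ E then h (y - x) else 0

open Classical in
def eb (h : ℕ → ℝ) (E : Set (ℤ × ℤ)) (v : ℕ → ℤ) (x y : ℕ) : ℝ :=
  if (v x, v y) ∈ E then h (y - x - 1) else 0

lemma gap_decomp (n : ℕ) (hn : 2 ≤ n) (h : ℕ → ℝ) (E : Set (ℤ × ℤ)) (v : ℕ → ℤ) :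
    hostilityGap n h E v
      = (∑ x ∈ Icc 1 (maxIdx n v - 1), ea h E v x (maxIdx n v))
        + (∑ y ∈ Icc (maxIdx n v) n, ea h E v (maxIdx n v) y)
        + ∑ x ∈ Icc 1 (maxIdx n v - 1), ∑ y ∈ Icc (maxIdx n v + 1) n,
            (ea h E v x y - eb h E v x y) := by
  classical
  obtain ⟨hm1, hmn, -⟩ := maxIdx_spec n (by omega) v
  set m := maxIdx n v with hm
  have hred1 : ∀ i, i < m → reduction n v i = v i := by
    intro i hi
    show (if i < maxIdx n v then v i else v (i+1)) = v i
    rw [if_pos (by omega : i < maxIdx n v)]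
  have hred2 : ∀ i, ¬ i < m → reduction n v i = v (i + 1) := by
    intro i hi
    show (if i < maxIdx n v then v i else v (i+1)) = v (i+1)
    rw [if_neg (by omega : ¬ i < maxIdx n v)]
  have hn1 : n - 1 + 1 = n := by omega
  -- decomposition of `Hostility n h E v`
  have Hv : Hostility n h E v
      = (((∑ x ∈ Icc 1 (m-1), ∑ y ∈ Icc x (m-1), ea h E v x y)
          + (∑ x ∈ Icc 1 (m-1), ea h E v x m)
          + ∑ x ∈ Icc 1 (m-1), ∑ y ∈ Icc (m+1) n, ea h E v x y)
         + (∑ y ∈ Icc m n, ea h E v m y))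
        + ∑ x ∈ Icc (m+1) n, ∑ y ∈ Icc x n, ea h E v x y := by
    have h0 : Hostility n h E v = ∑ x ∈ Icc 1 n, ∑ y ∈ Icc x n, ea h E v x y := rfl
    rw [h0, aux_Icc_split (fun x => ∑ y ∈ Icc x n, ea h E v x y) 1 m n hm1 hm1 hmn]
    have hx : ∀ x ∈ Icc 1 (m-1), (∑ y ∈ Icc x n, ea h E v x y)
        = (∑ y ∈ Icc x (m-1), ea h E v x y) + ea h E v x m
          + ∑ y ∈ Icc (m+1) n, ea h E v x y := by
      intro x hxm
      rw [Finset.mem_Icc] at hxm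
      rw [aux_Icc_split (fun y => ea h E v x y) x m n (by omega) hm1 hmn]
    rw [Finset.sum_congr rfl hx, Finset.sum_add_distrib, Finset.sum_add_distrib]
  -- decomposition of `Hostility (n-1) h E (reduction n v)`
  have Hr : Hostility (n-1) h E (reduction n v)
      = ((∑ x ∈ Icc 1 (m-1), ∑ y ∈ Icc x (m-1), ea h E v x y)
          + ∑ x ∈ Icc 1 (m-1), ∑ y ∈ Icc (m+1) n, eb h E v x y)
        + ∑ x ∈ Icc (m+1) n, ∑ y ∈ Icc x n, ea h E v x y := by
    have h0 : Hostility (n-1) h E (reduction n v)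
        = ∑ x ∈ Icc 1 (n-1), ∑ y ∈ Icc x (n-1),
            (if (reduction n v x, reduction n v y) ∈ E then h (y - x) else 0) := rfl
    rw [h0, aux_Icc_split2 _ 1 m (n-1) hm1 hm1 (by omega)]
    congr 1
    · -- x ∈ [1, m-1]
      have hx : ∀ x ∈ Icc 1 (m-1),
          (∑ y ∈ Icc x (n-1), (if (reduction n v x, reduction n v y) ∈ E then h (y - x) else 0))
            = (∑ y ∈ Icc x (m-1), ea h E v x y) + ∑ y ∈ Icc (m+1) n, eb h E v x y := by
        intro x hxm
        rw [Finset.mem_Icc] at hxm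
        rw [aux_Icc_split2 _ x m (n-1) (by omega) hm1 (by omega)]
        congr 1
        · apply Finset.sum_congr rfl
          intro y hy
          rw [Finset.mem_Icc] at hy
          rw [hred1 x (by omega), hred1 y (by omega)]
          rfl
        · have hsh := aux_shift (fun y => eb h E v x y) m (n-1)
          rw [hn1] at hsh
          rw [hsh]
          apply Finset.sum_congr rfl
          intro y hy
          rw [Finset.mem_Icc] at hy
          rw [hred1 x (by omega), hred2 y (by omega)]
          show _ = if (v x, v (y+1)) ∈ E then h (y + 1 - x - 1) else 0
          have harg : y + 1 - x - 1 = y - x := by omega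
          rw [harg]
      rw [Finset.sum_congr rfl hx, Finset.sum_add_distrib]
    · -- x ∈ [m, n-1]
      have hsh := aux_shift (fun x => ∑ y ∈ Icc x n, ea h E v x y) m (n-1)
      rw [hn1] at hsh
      rw [hsh]
      apply Finset.sum_congr rfl
      intro x hx
      rw [Finset.mem_Icc] at hx
      have hsh2 := aux_shift (fun y => ea h E v (x+1) y) x (n-1)
      rw [hn1] at hsh2
      rw [hsh2]
      apply Finset.sum_congr rfl
      intro y hy
      rw [Finset.mem_Icc] at hy
      rw [hred2 x (by omega), hred2 y (by omega)]
      show _ = if (v (x+1), v (y+1)) ∈ E then h (y + 1 - (x+1)) else 0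
      have harg : y + 1 - (x+1) = y - x := by omega
      rw [harg]
  have hsub : ∑ x ∈ Icc 1 (m-1), ∑ y ∈ Icc (m+1) n, (ea h E v x y - eb h E v x y)
      = (∑ x ∈ Icc 1 (m-1), ∑ y ∈ Icc (m+1) n, ea h E v x y)
        - ∑ x ∈ Icc 1 (m-1), ∑ y ∈ Icc (m+1) n, eb h E v x y := by
    rw [← Finset.sum_sub_distrib]
    apply Finset.sum_congr rfl
    intro x _
    rw [← Finset.sum_sub_distrib]
  show Hostility n h E v - Hostility (n-1) h E (reduction n v) = _
  rw [Hv, Hr, hsub]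
  ring
lemma count_ineq_s5 (n m c : ℕ) (hm1 : 1 ≤ m) (hmn : m ≤ n) (hn : 2 ≤ n) (hc : c ≤ n - 2)
    (L R : Finset ℕ) (hL : L ⊆ Icc 1 (m-1)) (hR : R ⊆ Icc (m+1) n) :
    ((Icc 1 (L.card + R.card)).filter (fun q => n - q ≤ c)).card
      ≤ ((L.filter (fun x => n - x ≤ c)).card + (R.filter (fun y => y - 1 ≤ c)).card)
        + ∑ x ∈ L, (R.filter (fun y => y - x - 1 = c)).card := by
  classical
  have hLsplit := Finset.card_filter_add_card_filter_not
    (s := L) (p := fun x => n - x ≤ c)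
  have hRsplit := Finset.card_filter_add_card_filter_not
    (s := R) (p := fun y => y - 1 ≤ c)
  set L' := L.filter (fun x => ¬ (n - x ≤ c)) with hL'
  set R' := R.filter (fun y => ¬ (y - 1 ≤ c)) with hR'
  set N' := n - c - 1 with hN'
  set I := L.filter (fun x => ¬ (n - x ≤ c) ∧ x + (c+1) ∈ R) with hI
  have hCI : I.card ≤ ∑ x ∈ L, (R.filter (fun y => y - x - 1 = c)).card := by
    rw [hI, Finset.card_filter]
    apply Finset.sum_le_sum
    intro x hx
    by_cases hcond : ¬ (n - x ≤ c) ∧ x + (c+1) ∈ R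
    · rw [if_pos hcond]
      have hmem : x + (c+1) ∈ R.filter (fun y => y - x - 1 = c) := by
        rw [Finset.mem_filter]
        exact ⟨hcond.2, by omega⟩
      have := Finset.card_pos.mpr ⟨_, hmem⟩
      omega
    · rw [if_neg hcond]; omega
  set R'' := R'.image (fun y => y - (c+1)) with hR''
  have hR'mem : ∀ y ∈ R', m + 1 ≤ y ∧ y ≤ n ∧ c + 2 ≤ y := by
    intro y hy
    rw [hR', Finset.mem_filter] at hy
    have := hR hy.1
    rw [Finset.mem_Icc] at this
    omega
  have hcard'' : R''.card = R'.card := by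
    rw [hR'']
    apply Finset.card_image_of_injOn
    intro y1 h1 y2 h2 heq
    have e1 := hR'mem y1 h1
    have e2 := hR'mem y2 h2
    have heq' : y1 - (c+1) = y2 - (c+1) := heq
    omega
  have hUnion : L' ∪ R'' ⊆ Icc 1 N' := by
    intro z hz
    rw [Finset.mem_union] at hz
    rw [Finset.mem_Icc]
    rcases hz with hz | hz
    · rw [hL', Finset.mem_filter] at hz
      have := hL hz.1
      rw [Finset.mem_Icc] at this
      omega
    · rw [hR'', Finset.mem_image] at hz
      obtain ⟨y, hy, rfl⟩ := hz
      have := hR'mem y hy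
      omega
  have hInter : L' ∩ R'' ⊆ I := by
    intro z hz
    rw [Finset.mem_inter] at hz
    obtain ⟨hz1, hz2⟩ := hz
    rw [hR'', Finset.mem_image] at hz2
    obtain ⟨y, hy, hyz⟩ := hz2
    have hmem := hR'mem y hy
    have hyz' : y = z + (c+1) := by omega
    rw [hL', Finset.mem_filter] at hz1
    rw [hI, Finset.mem_filter]
    refine ⟨hz1.1, hz1.2, ?_⟩
    rw [← hyz']
    have : y ∈ R := Finset.filter_subset _ _ (by rw [← hR']; exact hy)
    exact this
  have hcup : (L' ∪ R'').card + (L' ∩ R'').card = L'.card + R''.card :=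
    Finset.card_union_add_card_inter L' R''
  have hcupN : (L' ∪ R'').card ≤ N' := by
    calc (L' ∪ R'').card ≤ (Icc 1 N').card := Finset.card_le_card hUnion
    _ = N' := by rw [Nat.card_Icc]; omega
  have hIcard : (L' ∩ R'').card ≤ I.card := Finset.card_le_card hInter
  have hT : ((Icc 1 (L.card + R.card)).filter (fun q => n - q ≤ c)).card
      = (L.card + R.card) - N' := by
    have hset : (Icc 1 (L.card + R.card)).filter (fun q => n - q ≤ c)
        = Icc (n - c) (L.card + R.card) := by
      ext q
      rw [Finset.mem_filter, Finset.mem_Icc, Finset.mem_Icc]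
      omega
    rw [hset, Nat.card_Icc]
    omega
  rw [hT]
  omega

lemma key_ineq (n m : ℕ) (h : ℕ → ℝ) (hm1 : 1 ≤ m) (hmn : m ≤ n) (hn : 2 ≤ n)
    (hmono : ∀ i j, i ≤ j → j ≤ n - 1 → h j ≤ h i)
    (L R : Finset ℕ) (hL : L ⊆ Icc 1 (m-1)) (hR : R ⊆ Icc (m+1) n) :
    ∑ q ∈ Icc 1 (L.card + R.card), h (n - q)
      ≤ ((∑ x ∈ L, h (n - x)) + (∑ y ∈ R, h (y - 1)))
        + ∑ x ∈ L, ∑ y ∈ R, (h (y - x - 1) - h (y - x)) := by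
  classical
  have hδpos : ∀ c ∈ Icc 0 (n-2), 0 ≤ h c - h (c+1) := by
    intro c hc
    rw [Finset.mem_Icc] at hc
    have := hmono c (c+1) (by omega) (by omega)
    linarith
  have hexp : ∀ a, a ≤ n - 1 →
      h a = h (n-1) + ∑ c ∈ Icc 0 (n-2), (if a ≤ c then h c - h (c+1) else 0) := by
    intro a ha
    have h1 := aux_tele2 h a (n-2) (by omega)
    have h2 : n - 2 + 1 = n - 1 := by omega
    rw [h2] at h1
    rw [← aux_tail (fun c => h c - h (c+1)) a (n-2), h1]
    ring
  have sumgen : ∀ (F : Finset ℕ) (w : ℕ → ℕ), (∀ x ∈ F, w x ≤ n - 1) →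
      ∑ x ∈ F, h (w x) = (F.card : ℝ) * h (n-1)
        + ∑ c ∈ Icc 0 (n-2), ((F.filter (fun x => w x ≤ c)).card : ℝ) * (h c - h (c+1)) := by
    intro F w hw
    have h1 : ∀ x ∈ F, h (w x)
        = h (n-1) + ∑ c ∈ Icc 0 (n-2), (if w x ≤ c then h c - h (c+1) else 0) :=
      fun x hx => hexp (w x) (hw x hx)
    rw [Finset.sum_congr rfl h1, Finset.sum_add_distrib, Finset.sum_const, Finset.sum_comm]
    congr 1
    · rw [nsmul_eq_mul]
    · apply Finset.sum_congr rfl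
      intro c hc
      rw [Finset.sum_ite, Finset.sum_const_zero, add_zero, Finset.sum_const, nsmul_eq_mul]
  have hsumL : ∑ x ∈ L, h (n - x) = (L.card : ℝ) * h (n-1)
      + ∑ c ∈ Icc 0 (n-2), ((L.filter (fun x => n - x ≤ c)).card : ℝ) * (h c - h (c+1)) :=
    sumgen L (fun x => n - x) (by
      intro x hx
      have := hL hx
      rw [Finset.mem_Icc] at this
      show n - x ≤ n - 1
      omega)
  have hsumR : ∑ y ∈ R, h (y - 1) = (R.card : ℝ) * h (n-1)
      + ∑ c ∈ Icc 0 (n-2), ((R.filter (fun y => y - 1 ≤ c)).card : ℝ) * (h c - h (c+1)) :=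
    sumgen R (fun y => y - 1) (by
      intro y hy
      have := hR hy
      rw [Finset.mem_Icc] at this
      show y - 1 ≤ n - 1
      omega)
  have hsumT : ∑ q ∈ Icc 1 (L.card + R.card), h (n - q)
      = (((Icc 1 (L.card + R.card)).card : ℕ) : ℝ) * h (n-1)
        + ∑ c ∈ Icc 0 (n-2),
            (((Icc 1 (L.card + R.card)).filter (fun q => n - q ≤ c)).card : ℝ) * (h c - h (c+1)) :=
    sumgen (Icc 1 (L.card + R.card)) (fun q => n - q) (by
      intro q hq
      rw [Finset.mem_Icc] at hq
      show n - q ≤ n - 1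
      omega)
  have hsumX : ∑ x ∈ L, ∑ y ∈ R, (h (y - x - 1) - h (y - x))
      = ∑ c ∈ Icc 0 (n-2),
          ((∑ x ∈ L, (R.filter (fun y => y - x - 1 = c)).card : ℕ) : ℝ) * (h c - h (c+1)) := by
    have hptw : ∀ x ∈ L, ∑ y ∈ R, (h (y - x - 1) - h (y - x))
        = ∑ y ∈ R, ∑ c ∈ Icc 0 (n-2), (if y - x - 1 = c then h c - h (c+1) else 0) := by
      intro x hx
      apply Finset.sum_congr rfl
      intro y hy
      have hxm := hL hx
      have hym := hR hy
      rw [Finset.mem_Icc] at hxm hym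
      rw [Finset.sum_ite_eq (Icc 0 (n-2)) (y - x - 1) (fun c => h c - h (c+1))]
      rw [if_pos (by rw [Finset.mem_Icc]; omega)]
      have harg : y - x - 1 + 1 = y - x := by omega
      rw [harg]
    rw [Finset.sum_congr rfl hptw]
    have hsw : ∀ x ∈ L, ∑ y ∈ R, ∑ c ∈ Icc 0 (n-2), (if y - x - 1 = c then h c - h (c+1) else 0)
        = ∑ c ∈ Icc 0 (n-2), ∑ y ∈ R, (if y - x - 1 = c then h c - h (c+1) else 0) :=
      fun x _ => Finset.sum_comm
    rw [Finset.sum_congr rfl hsw, Finset.sum_comm]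
    apply Finset.sum_congr rfl
    intro c hc
    have hinner : ∀ x ∈ L, ∑ y ∈ R, (if y - x - 1 = c then h c - h (c+1) else 0)
        = ((R.filter (fun y => y - x - 1 = c)).card : ℝ) * (h c - h (c+1)) := by
      intro x _
      rw [Finset.sum_ite, Finset.sum_const_zero, add_zero, Finset.sum_const, nsmul_eq_mul]
    rw [Finset.sum_congr rfl hinner, ← Finset.sum_mul, ← Nat.cast_sum]
  rw [hsumL, hsumR, hsumT, hsumX]
  have hcast : ((L.card + R.card : ℕ) : ℝ) = (L.card : ℝ) + (R.card : ℝ) := by push_cast; ring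
  have hcardIcc : ((Icc 1 (L.card + R.card)).card : ℝ) = ((L.card + R.card : ℕ) : ℝ) := by
    rw [Nat.card_Icc]
    norm_num
  have hmain : ∑ c ∈ Icc 0 (n-2),
        (((Icc 1 (L.card + R.card)).filter (fun q => n - q ≤ c)).card : ℝ) * (h c - h (c+1))
      ≤ (∑ c ∈ Icc 0 (n-2), ((L.filter (fun x => n - x ≤ c)).card : ℝ) * (h c - h (c+1)))
        + (∑ c ∈ Icc 0 (n-2), ((R.filter (fun y => y - 1 ≤ c)).card : ℝ) * (h c - h (c+1)))
        + ∑ c ∈ Icc 0 (n-2),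
            ((∑ x ∈ L, (R.filter (fun y => y - x - 1 = c)).card : ℕ) : ℝ) * (h c - h (c+1)) := by
    rw [← Finset.sum_add_distrib, ← Finset.sum_add_distrib]
    apply Finset.sum_le_sum
    intro c hc
    have hcnt := count_ineq_s5 n m c hm1 hmn hn (by rw [Finset.mem_Icc] at hc; exact hc.2) L R hL hR
    have hd := hδpos c hc
    have hcnt' : (((Icc 1 (L.card + R.card)).filter (fun q => n - q ≤ c)).card : ℝ)
        ≤ ((L.filter (fun x => n - x ≤ c)).card : ℝ)
          + ((R.filter (fun y => y - 1 ≤ c)).card : ℝ)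
          + ((∑ x ∈ L, (R.filter (fun y => y - x - 1 = c)).card : ℕ) : ℝ) := by
      push_cast
      exact_mod_cast hcnt
    calc (((Icc 1 (L.card + R.card)).filter (fun q => n - q ≤ c)).card : ℝ) * (h c - h (c+1))
        ≤ (((L.filter (fun x => n - x ≤ c)).card : ℝ)
            + ((R.filter (fun y => y - 1 ≤ c)).card : ℝ)
            + ((∑ x ∈ L, (R.filter (fun y => y - x - 1 = c)).card : ℕ) : ℝ)) * (h c - h (c+1)) :=
          mul_le_mul_of_nonneg_right hcnt' hd
      _ = _ := by ring
  rw [hcardIcc]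
  have hprod : ((L.card + R.card : ℕ) : ℝ) * h (n-1)
      = (L.card : ℝ) * h (n-1) + (R.card : ℝ) * h (n-1) := by push_cast; ring
  linarith [hmain, hprod]
lemma gap_lower (n k : ℕ) (hn : 2 ≤ n) (h : ℕ → ℝ)
    (hmono : ∀ i j, i ≤ j → j ≤ n - 1 → h j ≤ h i) (v : ℕ → ℤ) :
    ∑ q ∈ Icc 1 (((Icc 1 n).filter (fun i => v i ≤ maxVal n v - ((k:ℤ)+1))).card), h (n - q)
      ≤ hostilityGap n h (enemyList k) v := by
  classical
  obtain ⟨hm1, hmn, hvm⟩ := maxIdx_spec n (by omega) v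
  rw [gap_decomp n hn h (enemyList k) v]
  set m := maxIdx n v with hm
  set μ := maxVal n v with hmu
  set P : ℕ → Prop := fun i => v i ≤ μ - ((k:ℤ)+1) with hP
  set L := (Icc 1 (m-1)).filter P with hLdef
  set R := (Icc (m+1) n).filter P with hRdef
  have hub : ∀ i, 1 ≤ i → i ≤ n → v i ≤ μ := fun i h1 h2 => maxVal_ub n v i h1 h2
  have hPm : ¬ P m := by
    rw [hP]
    simp only [hvm]
    omega
  have hLsub : L ⊆ Icc 1 (m-1) := Finset.filter_subset _ _
  have hRsub : R ⊆ Icc (m+1) n := Finset.filter_subset _ _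
  -- the total count splits as |L| + |R|
  have htsplit : ((Icc 1 n).filter P).card = L.card + R.card := by
    have hsplitset : Icc 1 n = (Icc 1 (m-1) ∪ {m}) ∪ Icc (m+1) n := by
      ext i; simp only [mem_Icc, mem_union, mem_singleton]; omega
    have d1 : Disjoint ((Icc 1 (m-1)).filter P) (({m} : Finset ℕ).filter P) := by
      apply Finset.disjoint_filter_filter
      simp only [Finset.disjoint_left, mem_Icc, mem_singleton]
      omega
    have d2 : Disjoint ((Icc 1 (m-1)).filter P ∪ ({m} : Finset ℕ).filter P)
        ((Icc (m+1) n).filter P) := by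
      apply Finset.disjoint_union_left.mpr
      constructor <;>
      · apply Finset.disjoint_filter_filter
        simp only [Finset.disjoint_left, mem_Icc, mem_singleton]
        omega
    rw [hsplitset, Finset.filter_union, Finset.filter_union,
      Finset.card_union_of_disjoint d2, Finset.card_union_of_disjoint d1,
      Finset.filter_singleton, if_neg hPm, Finset.card_empty, ← hLdef, ← hRdef]
    omega
  rw [htsplit]
  -- evaluate the first sum
  have hE1 : ∀ x ∈ Icc 1 (m-1),
      ea h (enemyList k) v x m = if P x then h (m - x) else 0 := by
    intro x hx
    rw [Finset.mem_Icc] at hx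
    show (if (v x, v m) ∈ enemyList k then h (m - x) else 0) = _
    apply if_congr _ rfl rfl
    show ((k:ℤ)+1 ≤ |v m - v x|) ↔ P x
    rw [hP]; simp only
    rw [hvm]
    have hx' := hub x hx.1 (by omega)
    rw [abs_of_nonneg (by omega : (0:ℤ) ≤ μ - v x)]
    omega
  rw [Finset.sum_congr rfl hE1, ← Finset.sum_filter, ← hLdef]
  -- evaluate the second sum
  have hE2 : ∀ y ∈ Icc m n,
      ea h (enemyList k) v m y = if P y then h (y - m) else 0 := by
    intro y hy
    rw [Finset.mem_Icc] at hy
    show (if (v m, v y) ∈ enemyList k then h (y - m) else 0) = _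
    apply if_congr _ rfl rfl
    show ((k:ℤ)+1 ≤ |v y - v m|) ↔ P y
    rw [hP]; simp only
    rw [hvm]
    have hy' := hub y (by omega) hy.2
    rw [abs_of_nonpos (by omega : v y - μ ≤ 0)]
    omega
  rw [Finset.sum_congr rfl hE2, ← Finset.sum_filter]
  have hfilR : (Icc m n).filter P = R := by
    rw [hRdef]
    ext i
    simp only [Finset.mem_filter, mem_Icc]
    constructor
    · rintro ⟨⟨h1, h2⟩, hp⟩
      have : i ≠ m := fun e => hPm (e ▸ hp)
      exact ⟨⟨by omega, h2⟩, hp⟩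
    · rintro ⟨⟨h1, h2⟩, hp⟩
      exact ⟨⟨by omega, h2⟩, hp⟩
  rw [hfilR]
  -- lower-bound the straddling double sum
  have hE3 : ∀ x ∈ Icc 1 (m-1), ∀ y ∈ Icc (m+1) n,
      (if P x ∨ P y then h (y - x) - h (y - x - 1) else 0)
        ≤ ea h (enemyList k) v x y - eb h (enemyList k) v x y := by
    intro x hx y hy
    rw [Finset.mem_Icc] at hx hy
    have hd : h (y - x) ≤ h (y - x - 1) := hmono (y-x-1) (y-x) (by omega) (by omega)
    show _ ≤ (if (v x, v y) ∈ enemyList k then h (y - x) else 0)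
        - (if (v x, v y) ∈ enemyList k then h (y - x - 1) else 0)
    by_cases hhost : (v x, v y) ∈ enemyList k
    · rw [if_pos hhost, if_pos hhost]
      have habs : (k:ℤ)+1 ≤ |v y - v x| := hhost
      have hPor : P x ∨ P y := by
        have h1 := hub x hx.1 (by omega)
        have h2 := hub y (by omega) hy.2
        rw [hP]; simp only
        rcases abs_cases (v y - v x) with ⟨he, _⟩ | ⟨he, _⟩ <;> omega
      rw [if_pos hPor]
    · rw [if_neg hhost, if_neg hhost]
      by_cases hPor : P x ∨ P y
      · rw [if_pos hPor]; linarith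
      · rw [if_neg hPor]; linarith
  have hsum3 : ∑ x ∈ Icc 1 (m-1), ∑ y ∈ Icc (m+1) n,
        (if P x ∨ P y then h (y - x) - h (y - x - 1) else 0)
      ≤ ∑ x ∈ Icc 1 (m-1), ∑ y ∈ Icc (m+1) n,
          (ea h (enemyList k) v x y - eb h (enemyList k) v x y) :=
    Finset.sum_le_sum (fun x hx => Finset.sum_le_sum (fun y hy => hE3 x hx y hy))
  -- rewrite the indicator double sum into three pieces
  have hid : ∀ x y : ℕ, (if P x ∨ P y then h (y - x) - h (y - x - 1) else 0)
      = (if P x then h (y - x) - h (y - x - 1) else 0)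
        + (if P y then h (y - x) - h (y - x - 1) else 0)
        - (if P x then (if P y then h (y - x) - h (y - x - 1) else 0) else 0) := by
    intro x y
    by_cases h1 : P x <;> by_cases h2 : P y <;> simp [h1, h2]
  have hsplit3 : ∑ x ∈ Icc 1 (m-1), ∑ y ∈ Icc (m+1) n,
        (if P x ∨ P y then h (y - x) - h (y - x - 1) else 0)
      = (∑ x ∈ L, ∑ y ∈ Icc (m+1) n, (h (y - x) - h (y - x - 1)))
        + (∑ y ∈ R, ∑ x ∈ Icc 1 (m-1), (h (y - x) - h (y - x - 1)))
        - ∑ x ∈ L, ∑ y ∈ R, (h (y - x) - h (y - x - 1)) := by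
    have hpt : ∀ x ∈ Icc 1 (m-1), ∑ y ∈ Icc (m+1) n,
          (if P x ∨ P y then h (y - x) - h (y - x - 1) else 0)
        = (if P x then (∑ y ∈ Icc (m+1) n, (h (y - x) - h (y - x - 1))) else 0)
          + (∑ y ∈ R, (h (y - x) - h (y - x - 1)))
          - (if P x then (∑ y ∈ R, (h (y - x) - h (y - x - 1))) else 0) := by
      intro x _
      have e1 : ∑ y ∈ Icc (m+1) n, (if P x ∨ P y then h (y - x) - h (y - x - 1) else 0)
          = ∑ y ∈ Icc (m+1) n, ((if P x then h (y - x) - h (y - x - 1) else 0)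
              + (if P y then h (y - x) - h (y - x - 1) else 0)
              - (if P x then (if P y then h (y - x) - h (y - x - 1) else 0) else 0)) :=
        Finset.sum_congr rfl (fun y _ => hid x y)
      rw [e1]
      rw [Finset.sum_sub_distrib, Finset.sum_add_distrib]
      have a1 : ∑ y ∈ Icc (m+1) n, (if P x then h (y - x) - h (y - x - 1) else 0)
          = (if P x then (∑ y ∈ Icc (m+1) n, (h (y - x) - h (y - x - 1))) else 0) := by
        by_cases hPx : P x
        · simp only [if_pos hPx]
        · simp only [if_neg hPx, Finset.sum_const_zero]
      have a2 : ∑ y ∈ Icc (m+1) n, (if P y then h (y - x) - h (y - x - 1) else 0)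
          = ∑ y ∈ R, (h (y - x) - h (y - x - 1)) := by
        rw [hRdef, Finset.sum_filter]
      have a3 : ∑ y ∈ Icc (m+1) n,
            (if P x then (if P y then h (y - x) - h (y - x - 1) else 0) else 0)
          = (if P x then (∑ y ∈ R, (h (y - x) - h (y - x - 1))) else 0) := by
        by_cases hPx : P x
        · simp only [if_pos hPx]
          rw [hRdef, Finset.sum_filter]
        · simp only [if_neg hPx, Finset.sum_const_zero]
      rw [a1, a2, a3]
    rw [Finset.sum_congr rfl hpt, Finset.sum_sub_distrib, Finset.sum_add_distrib]
    have b1 : ∑ x ∈ Icc 1 (m-1),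
          (if P x then (∑ y ∈ Icc (m+1) n, (h (y - x) - h (y - x - 1))) else 0)
        = ∑ x ∈ L, ∑ y ∈ Icc (m+1) n, (h (y - x) - h (y - x - 1)) := by
      rw [hLdef, Finset.sum_filter]
    have b2 : ∑ x ∈ Icc 1 (m-1), ∑ y ∈ R, (h (y - x) - h (y - x - 1))
        = ∑ y ∈ R, ∑ x ∈ Icc 1 (m-1), (h (y - x) - h (y - x - 1)) := Finset.sum_comm
    have b3 : ∑ x ∈ Icc 1 (m-1), (if P x then (∑ y ∈ R, (h (y - x) - h (y - x - 1))) else 0)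
        = ∑ x ∈ L, ∑ y ∈ R, (h (y - x) - h (y - x - 1)) := by
      rw [hLdef, Finset.sum_filter]
    rw [b1, b2, b3]
  -- telescoping evaluations
  have htel1 : ∀ x ∈ L, ∑ y ∈ Icc (m+1) n, (h (y - x) - h (y - x - 1))
      = h (n - x) - h (m - x) := by
    intro x hx
    have hx' := hLsub hx
    rw [Finset.mem_Icc] at hx'
    have e1 : ∀ y ∈ Icc (m+1) n, h (y - x) - h (y - x - 1)
        = (fun y => h (y - x)) y - (fun y => h (y - x)) (y - 1) := by
      intro y hy
      rw [Finset.mem_Icc] at hy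
      simp only
      congr 2
      omega
    rw [Finset.sum_congr rfl e1, aux_tele1 (fun y => h (y - x)) m n hmn]
  have htel2 : ∀ y ∈ R, ∑ x ∈ Icc 1 (m-1), (h (y - x) - h (y - x - 1))
      = h (y - 1) - h (y - m) := by
    intro y hy
    have hy' := hRsub hy
    rw [Finset.mem_Icc] at hy'
    have e1 : ∀ x ∈ Icc 1 (m-1), h (y - x) - h (y - x - 1)
        = (fun x => h (y - x)) x - (fun x => h (y - x)) (x + 1) := by
      intro x hx
      rfl
    rw [Finset.sum_congr rfl e1, aux_tele2 (fun x => h (y - x)) 1 (m-1) (by omega)]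
    have e2 : m - 1 + 1 = m := by omega
    rw [e2]
  -- now use key_ineq
  have hkey := key_ineq n m h hm1 hmn hn hmono L R hLsub hRsub
  -- final assembly
  have hXY : ∑ x ∈ L, ∑ y ∈ R, (h (y - x - 1) - h (y - x))
      = - ∑ x ∈ L, ∑ y ∈ R, (h (y - x) - h (y - x - 1)) := by
    rw [← Finset.sum_neg_distrib]
    apply Finset.sum_congr rfl
    intro x _
    rw [← Finset.sum_neg_distrib]
    apply Finset.sum_congr rfl
    intro y _
    ring
  have hC : ∑ x ∈ L, ∑ y ∈ Icc (m+1) n, (h (y - x) - h (y - x - 1))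
      = (∑ x ∈ L, h (n - x)) - ∑ x ∈ L, h (m - x) := by
    rw [Finset.sum_congr rfl htel1, Finset.sum_sub_distrib]
  have hD : ∑ y ∈ R, ∑ x ∈ Icc 1 (m-1), (h (y - x) - h (y - x - 1))
      = (∑ y ∈ R, h (y - 1)) - ∑ y ∈ R, h (y - m) := by
    rw [Finset.sum_congr rfl htel2, Finset.sum_sub_distrib]
  rw [hXY] at hkey
  rw [hsplit3, hC, hD] at hsum3
  linarith [hkey, hsum3]
lemma gap_sorted (n k : ℕ) (hn : 2 ≤ n) (h : ℕ → ℝ) (v : ℕ → ℤ) :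
    hostilityGap n h (enemyList k) (Mrearr n v)
      = ∑ q ∈ Icc 1 (((Icc 1 n).filter (fun i => v i ≤ maxVal n v - ((k:ℤ)+1))).card),
          h (n - q) := by
  classical
  have hn1 : (1:ℕ) ≤ n := by omega
  set u := Mrearr n v with hu
  have hidx : maxIdx n u = n := maxIdx_mrearr n hn1 v
  have htop : u n = maxVal n v := mrearr_top n hn1 v
  set t := ((Icc 1 n).filter (fun i => v i ≤ maxVal n v - ((k:ℤ)+1))).card with ht
  -- t ≤ n - 1
  have htn : t ≤ n - 1 := by
    obtain ⟨hm1, hmn, hvm⟩ := maxIdx_spec n hn1 v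
    have hsub : (Icc 1 n).filter (fun i => v i ≤ maxVal n v - ((k:ℤ)+1))
        ⊆ (Icc 1 n).erase (maxIdx n v) := by
      intro i hi
      rw [Finset.mem_filter] at hi
      rw [Finset.mem_erase]
      refine ⟨?_, hi.1⟩
      intro he
      have := hi.2
      rw [he, hvm] at this
      omega
    have hc := Finset.card_le_card hsub
    rw [Finset.card_erase_of_mem (by rw [Finset.mem_Icc]; omega), Nat.card_Icc] at hc
    omega
  rw [gap_decomp n hn h (enemyList k) u, hidx]
  have hempty : Icc (n+1) n = (∅ : Finset ℕ) := Finset.Icc_eq_empty (by omega)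
  rw [hempty]
  have hzero : ∑ x ∈ Icc 1 (n-1), ∑ y ∈ (∅ : Finset ℕ),
      (ea h (enemyList k) u x y - eb h (enemyList k) u x y) = 0 := by
    apply Finset.sum_eq_zero
    intro x _
    exact Finset.sum_empty
  rw [hzero, add_zero]
  rw [Finset.Icc_self, Finset.sum_singleton]
  have henn : ea h (enemyList k) u n n = 0 := by
    show (if (u n, u n) ∈ enemyList k then h (n - n) else 0) = 0
    rw [if_neg]
    intro hcon
    have hc : (k:ℤ)+1 ≤ |u n - u n| := hcon
    rw [sub_self, abs_zero] at hc
    omega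
  rw [henn, add_zero]
  have hxeq : ∀ x ∈ Icc 1 (n-1),
      ea h (enemyList k) u x n = if x ≤ t then h (n - x) else 0 := by
    intro x hx
    rw [Finset.mem_Icc] at hx
    show (if (u x, u n) ∈ enemyList k then h (n - x) else 0) = _
    apply if_congr _ rfl rfl
    have hle : u x ≤ u n := mrearr_mono n hn1 v x n hx.1 (by omega) le_rfl
    show ((k:ℤ)+1 ≤ |u n - u x|) ↔ x ≤ t
    rw [abs_of_nonneg (by omega : (0:ℤ) ≤ u n - u x), htop]
    constructor
    · intro hcon
      have hx' : u x ≤ maxVal n v - ((k:ℤ)+1) := by omega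
      have := (mrearr_le_iff n hn1 v x (maxVal n v - ((k:ℤ)+1)) hx.1 (by omega)).mp hx'
      rw [ht]
      exact this
    · intro hxt
      have hx' : x ≤ ((Icc 1 n).filter (fun y => v y ≤ maxVal n v - ((k:ℤ)+1))).card := by
        rw [← ht]; exact hxt
      have := (mrearr_le_iff n hn1 v x (maxVal n v - ((k:ℤ)+1)) hx.1 (by omega)).mpr hx'
      rw [← hu] at this
      omega
  rw [Finset.sum_congr rfl hxeq, ← Finset.sum_filter]
  have hfil : (Icc 1 (n-1)).filter (fun x => x ≤ t) = Icc 1 t := by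
    ext q
    simp only [Finset.mem_filter, mem_Icc]
    omega
  rw [hfil]

/-- **Monotone rearrangement decreases the hostility gap** (inequality (2.8)):
`Δ(E_k, v) ≥ Δ(E_k, Mv)`. -/
theorem hostilityGap_rearrangement (n k : ℕ) (hn : 2 ≤ n) (hk : 0 < k)
    (h : ℕ → ℝ) (hmono : ∀ i j, i ≤ j → j ≤ n - 1 → h j ≤ h i)
    (v : ℕ → ℤ) :
    hostilityGap n h (enemyList k) (Mrearr n v) ≤ hostilityGap n h (enemyList k) v := by
  rw [gap_sorted n k hn h v]
  exact gap_lower n k hn h hmono v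
end
end

section
/- Let δ > 0 and p ≥ 1 be real numbers, and let u : ℝ → ℝ be a δ-step function. Then there exists a family {u_ε}_{ε>0} of functions of class C^∞ with compact support on ℝ such that u_ε → u in L^p(ℝ) as ε → 0⁺ and lim_{ε→0⁺} Λ_{δ,p}(u_ε,ℝ) = Λ_{δ,p}(u,ℝ). -/
open MeasureTheory Filter Topology Set
open scoped ENNReal NNReal

noncomputable section

namespace SmoothApproxAux

/-- The smooth approximation: a sum of smooth transitions. -/
def ua (δ : ℝ) (n : ℕ) (X K : ℕ → ℝ) (ε z : ℝ) : ℝ :=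
  δ * ∑ j ∈ Finset.range (n + 1),
    (K (j + 1) - K j) * Real.smoothTransition ((z - X j) / ε)

variable {u : ℝ → ℝ} {δ p ε g z x y a : ℝ} {n : ℕ} {X K : ℕ → ℝ}

lemma st_zero (hε : 0 < ε) (h : z ≤ a) : Real.smoothTransition ((z - a) / ε) = 0 :=
  Real.smoothTransition.zero_of_nonpos
    (div_nonpos_iff.mpr (Or.inr ⟨by linarith, hε.le⟩))

lemma st_one (hε : 0 < ε) (h : a + ε ≤ z) : Real.smoothTransition ((z - a) / ε) = 1 :=
  Real.smoothTransition.one_of_one_le ((one_le_div hε).mpr (by linarith))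

lemma ua_contDiff : ContDiff ℝ (⊤ : ℕ∞) (ua δ n X K ε) := by
  refine contDiff_const.mul (ContDiff.sum fun j _ => contDiff_const.mul ?_)
  exact Real.smoothTransition.contDiff.comp ((contDiff_id.sub contDiff_const).div_const ε)

lemma X_mono (hX : ∀ i, i < n → X i < X (i + 1)) :
    ∀ a b, a ≤ b → b ≤ n → X a ≤ X b := by
  intro a b hab hbn
  induction b with
  | zero => simp [Nat.le_zero.mp hab]
  | succ b ih =>
    rcases Nat.lt_or_ge a (b + 1) with h | h
    · exact le_trans (ih (by omega) (by omega)) (le_of_lt (hX b (by omega)))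
    · have : a = b + 1 := le_antisymm hab h
      simp [this]

lemma ua_eq_zero_left (hε : 0 < ε) (hX : ∀ i, i < n → X i < X (i + 1)) (hz : z ≤ X 0) :
    ua δ n X K ε z = 0 := by
  unfold ua
  have h : ∀ j ∈ Finset.range (n + 1),
      (K (j + 1) - K j) * Real.smoothTransition ((z - X j) / ε) = 0 := by
    intro j hj
    have hXj : X 0 ≤ X j := X_mono hX 0 j (Nat.zero_le _)
      (Nat.lt_succ_iff.mp (Finset.mem_range.mp hj))
    rw [st_zero hε (by linarith), mul_zero]
  rw [Finset.sum_eq_zero h, mul_zero]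

lemma ua_eq_zero_right (hε : 0 < ε) (hX : ∀ i, i < n → X i < X (i + 1))
    (hK0 : K 0 = 0) (hKn : K (n + 1) = 0) (hz : X n + ε ≤ z) :
    ua δ n X K ε z = 0 := by
  unfold ua
  have h : ∀ j ∈ Finset.range (n + 1),
      (K (j + 1) - K j) * Real.smoothTransition ((z - X j) / ε)
        = K (j + 1) - K j := by
    intro j hj
    have hXj : X j ≤ X n := X_mono hX j n
      (Nat.lt_succ_iff.mp (Finset.mem_range.mp hj)) le_rfl
    rw [st_one hε (by linarith), mul_one]
  rw [Finset.sum_congr rfl h, Finset.sum_range_sub, hK0, hKn]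
  ring

/-- Key evaluation: if `z` is to the right of all transitions `j < i` and to the left of all
transitions `j > i`, then `ua` only sees transition `i`. -/
lemma ua_eval (hε : 0 < ε) (hK0 : K 0 = 0) (hi : i ≤ n)
    (h1 : ∀ j, j < i → X j + ε ≤ z) (h2 : ∀ j, i < j → j ≤ n → z ≤ X j) :
    ua δ n X K ε z
      = δ * (K i + (K (i + 1) - K i) * Real.smoothTransition ((z - X i) / ε)) := by
  unfold ua
  have hcongr : ∀ j ∈ Finset.range (n + 1),
      (K (j + 1) - K j) * Real.smoothTransition ((z - X j) / ε)
        = (if j < i then K (j + 1) - K j else if j = i then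
            (K (i + 1) - K i) * Real.smoothTransition ((z - X i) / ε) else 0) := by
    intro j hj
    have hjn : j ≤ n := Nat.lt_succ_iff.mp (Finset.mem_range.mp hj)
    rcases Nat.lt_trichotomy j i with h | h | h
    · rw [if_pos h, st_one hε (h1 j h), mul_one]
    · subst h; rw [if_neg (lt_irrefl _), if_pos rfl]
    · rw [if_neg (by omega), if_neg (by omega), st_zero hε (h2 j h hjn), mul_zero]
  rw [Finset.sum_congr rfl hcongr]
  rw [← Finset.sum_subset (Finset.range_subset_range.mpr (by omega : i + 1 ≤ n + 1))
    (by intro j _ hj; rw [Finset.mem_range, Nat.lt_succ_iff, not_le] at hj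
        rw [if_neg (by omega), if_neg (by omega)])]
  rw [Finset.sum_range_succ, if_neg (lt_irrefl _), if_pos rfl]
  have : ∀ j ∈ Finset.range i, (if j < i then K (j + 1) - K j else if j = i then
      (K (i + 1) - K i) * Real.smoothTransition ((z - X i) / ε) else 0)
      = K (j + 1) - K j := by
    intro j hj; rw [if_pos (Finset.mem_range.mp hj)]
  rw [Finset.sum_congr rfl this, Finset.sum_range_sub, hK0]
  ring

/-- Locating a point which avoids all the (closed) transition zones. -/
lemma locate (hε : 0 < ε) (hX : ∀ i, i < n → X i < X (i + 1))
    (hz : ∀ j, j ≤ n → z < X j ∨ X j + ε < z) :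
    ∃ i, i ≤ n ∧ (∀ j, j < i → X j + ε ≤ z) ∧ (∀ j, i < j → j ≤ n → z ≤ X j) ∧
      ((z < X i ∧ (i = 0 ∨ (1 ≤ i ∧ X (i - 1) + ε < z))) ∨ (i = n ∧ X n + ε < z)) := by
  classical
  by_cases hPn : X n + ε < z
  · refine ⟨n, le_rfl, fun j hj => ?_, fun j h1 h2 => absurd (h1.trans_le h2) (lt_irrefl _),
      Or.inr ⟨rfl, hPn⟩⟩
    have := X_mono hX j n hj.le le_rfl
    linarith
  · by_cases hex : ∃ j, j ≤ n ∧ X j + ε < z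
    · obtain ⟨j0, hj0n, hj0⟩ := hex
      obtain ⟨i, hi_le, hPi, hgr⟩ : ∃ i, i ≤ n ∧ X i + ε < z ∧
          ∀ j, i < j → j ≤ n → ¬(X j + ε < z) :=
        ⟨Nat.findGreatest (fun j => X j + ε < z) n, Nat.findGreatest_le n,
          Nat.findGreatest_spec (P := fun j => X j + ε < z) hj0n hj0,
          fun j h1 h2 => Nat.findGreatest_is_greatest h1 h2⟩
      have hin : i < n := lt_of_le_of_ne hi_le (by rintro rfl; exact hPn hPi)
      refine ⟨i + 1, by omega, fun j hj => ?_, fun j h1 h2 => ?_, Or.inl ⟨?_, Or.inr ⟨by omega, by simpa using hPi⟩⟩⟩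
      · have := X_mono hX j i (by omega) hi_le; linarith
      · rcases hz j h2 with h | h
        · exact h.le
        · exact absurd h (hgr j (by omega) h2)
      · rcases hz (i + 1) (by omega) with h | h
        · exact h
        · exact absurd h (hgr (i + 1) (by omega) (by omega))
    · push_neg at hex
      refine ⟨0, Nat.zero_le _, fun j hj => absurd hj (Nat.not_lt_zero _), fun j h1 h2 => ?_,
        Or.inl ⟨?_, Or.inl rfl⟩⟩
      · rcases hz j h2 with h | h
        · exact h.le
        · linarith [hex j h2]
      · rcases hz 0 (Nat.zero_le _) with h | h
        · exact h
        · linarith [hex 0 (Nat.zero_le _)]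

/-- Off the (closed) transition zones, `ua` agrees with the step function `u`. -/
lemma ua_eq_u (hε : 0 < ε) (hX : ∀ i, i < n → X i < X (i + 1))
    (hK0 : K 0 = 0) (hKn : K (n + 1) = 0)
    (hu0 : ∀ y, y < X 0 → u y = 0) (hun : ∀ y, X n < y → u y = 0)
    (huk : ∀ i, 1 ≤ i → i ≤ n → ∀ y, X (i - 1) < y → y < X i → u y = K i * δ)
    (hz : ∀ j, j ≤ n → z < X j ∨ X j + ε < z) :
    ua δ n X K ε z = u z := by
  obtain ⟨i, hi, h1, h2, hcase⟩ := locate hε hX hz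
  rcases hcase with ⟨hzi, hi0⟩ | ⟨hin, hzn⟩
  · rw [ua_eval hε hK0 hi h1 h2, st_zero hε hzi.le, mul_zero, add_zero]
    rcases hi0 with rfl | ⟨hi1, hiz⟩
    · rw [hK0, mul_zero, hu0 z hzi]
    · rw [huk i hi1 hi z (by linarith) hzi]; ring
  · subst hin
    rw [ua_eval hε hK0 le_rfl h1 h2, st_one hε hzn.le, mul_one,
      hun z (by linarith)]
    rw [hKn]; ring


/-- Any two points at distance `< g/2` fit in a common "window" around a single transition. -/
lemma window (hX : ∀ i, i < n → X i < X (i + 1)) (hg : 0 < g)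
    (hgap : ∀ i, i < n → X i + g ≤ X (i + 1))
    (hxy : x ≤ y) (hd : y - x < g / 2) :
    ∃ i, i ≤ n ∧ (∀ j, j < i → X j + g / 2 ≤ x) ∧ (∀ j, i < j → j ≤ n → y ≤ X j) := by
  classical
  by_cases hex : ∃ j, j ≤ n ∧ X j < y
  · obtain ⟨i, hi_le, hPi, hgr⟩ : ∃ i, i ≤ n ∧ X i < y ∧
        ∀ j, i < j → j ≤ n → ¬(X j < y) := by
      obtain ⟨j0, hj0n, hj0⟩ := hex
      exact ⟨Nat.findGreatest (fun j => X j < y) n, Nat.findGreatest_le n,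
        Nat.findGreatest_spec (P := fun j => X j < y) hj0n hj0,
        fun j h1 h2 => Nat.findGreatest_is_greatest h1 h2⟩
    refine ⟨i, hi_le, fun j hj => ?_, fun j h1 h2 => le_of_not_gt (hgr j h1 h2)⟩
    have hji : j + 1 ≤ i := hj
    have h3 : X j + g ≤ X (j + 1) := hgap j (by omega)
    have h4 : X (j + 1) ≤ X i := X_mono hX (j + 1) i hji hi_le
    linarith
  · push_neg at hex
    exact ⟨0, Nat.zero_le _, fun j hj => absurd hj (Nat.not_lt_zero _),
      fun j h1 h2 => hex j h2⟩

/-- Uniform continuity-type bound: `ua` varies by at most `δ` over distances `< g/2`. -/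
lemma ua_dist_le (hδ : 0 < δ) (hε : 0 < ε) (hεg : ε ≤ g / 2)
    (hX : ∀ i, i < n → X i < X (i + 1)) (hg : 0 < g)
    (hgap : ∀ i, i < n → X i + g ≤ X (i + 1))
    (hK0 : K 0 = 0) (hKd : ∀ j, j ≤ n → |K (j + 1) - K j| ≤ 1)
    (hxy : |y - x| < g / 2) :
    |ua δ n X K ε y - ua δ n X K ε x| ≤ δ := by
  suffices H : ∀ a b : ℝ, a ≤ b → b - a < g / 2 →
      |ua δ n X K ε b - ua δ n X K ε a| ≤ δ by
    rcases le_total x y with h | h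
    · exact H x y h (lt_of_le_of_lt (le_abs_self _) hxy)
    · rw [abs_sub_comm]
      exact H y x h (by rw [abs_sub_comm] at hxy; exact lt_of_le_of_lt (le_abs_self _) hxy)
  intro a b hab hd
  obtain ⟨i, hi, h1, h2⟩ := window hX hg hgap hab hd
  have e1 := ua_eval (δ := δ) (K := K) (z := a) hε hK0 hi
    (fun j hj => le_trans (by linarith [h1 j hj]) le_rfl)
    (fun j hj hjn => le_trans hab (h2 j hj hjn))
  have e2 := ua_eval (δ := δ) (K := K) (z := b) hε hK0 hi
    (fun j hj => le_trans (by linarith [h1 j hj]) hab)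
    (fun j hj hjn => h2 j hj hjn)
  rw [e1, e2]
  have hsub : δ * (K i + (K (i + 1) - K i) * Real.smoothTransition ((b - X i) / ε))
      - δ * (K i + (K (i + 1) - K i) * Real.smoothTransition ((a - X i) / ε))
      = δ * ((K (i + 1) - K i) *
        (Real.smoothTransition ((b - X i) / ε) - Real.smoothTransition ((a - X i) / ε))) := by
    ring
  rw [hsub, abs_mul, abs_mul, abs_of_pos hδ]
  have ht : |Real.smoothTransition ((b - X i) / ε) - Real.smoothTransition ((a - X i) / ε)| ≤ 1 := by
    rw [abs_sub_le_iff]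
    constructor <;>
      linarith [Real.smoothTransition.nonneg ((b - X i) / ε),
        Real.smoothTransition.le_one ((b - X i) / ε),
        Real.smoothTransition.nonneg ((a - X i) / ε),
        Real.smoothTransition.le_one ((a - X i) / ε)]
  calc δ * (|K (i + 1) - K i| * |_root_.id (Real.smoothTransition ((b - X i) / ε)
        - Real.smoothTransition ((a - X i) / ε))|)
      ≤ δ * (1 * 1) := by
        apply mul_le_mul_of_nonneg_left _ hδ.le
        apply mul_le_mul (hKd i hi) (by simpa using ht) (abs_nonneg _) zero_le_one
    _ = δ := by ring

/-- The step function `u` varies by at most `δ` over distances `< g/2`, away from the nodes. -/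
lemma u_dist_le (hδ : 0 < δ)
    (hX : ∀ i, i < n → X i < X (i + 1)) (hg : 0 < g)
    (hgap : ∀ i, i < n → X i + g ≤ X (i + 1))
    (hK0 : K 0 = 0) (hKn : K (n + 1) = 0)
    (hKd : ∀ j, j ≤ n → |K (j + 1) - K j| ≤ 1)
    (hu0 : ∀ y, y < X 0 → u y = 0) (hun : ∀ y, X n < y → u y = 0)
    (huk : ∀ i, 1 ≤ i → i ≤ n → ∀ y, X (i - 1) < y → y < X i → u y = K i * δ)
    (hxP : ∀ i, i ≤ n → x ≠ X i) (hyP : ∀ i, i ≤ n → y ≠ X i)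
    (hxy : |y - x| < g / 2) :
    |u y - u x| ≤ δ := by
  suffices H : ∀ a b : ℝ, (∀ i, i ≤ n → a ≠ X i) → (∀ i, i ≤ n → b ≠ X i) →
      a ≤ b → b - a < g / 2 → |u b - u a| ≤ δ by
    rcases le_total x y with h | h
    · exact H x y hxP hyP h (lt_of_le_of_lt (le_abs_self _) hxy)
    · rw [abs_sub_comm]
      exact H y x hyP hxP h (by rw [abs_sub_comm] at hxy; exact lt_of_le_of_lt (le_abs_self _) hxy)
  intro a b haP hbP hab hd
  obtain ⟨i, hi, h1, h2⟩ := window hX hg hgap hab hd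
  have hval : ∀ z, (∀ j, j ≤ n → z ≠ X j) → a ≤ z → z ≤ b →
      u z = K i * δ ∨ u z = K (i + 1) * δ := by
    intro z hzP haz hzb
    rcases lt_or_gt_of_ne (hzP i hi) with hzi | hzi
    · left
      rcases Nat.eq_zero_or_pos i with rfl | hi1
      · rw [hu0 z hzi, hK0, zero_mul]
      · have hx1 : X (i - 1) + g / 2 ≤ a := h1 (i - 1) (by omega)
        exact huk i hi1 hi z (by linarith) hzi
    · right
      rcases eq_or_lt_of_le hi with rfl | hin
      · rw [hun z hzi, hKn, zero_mul]
      · have hzX : z < X (i + 1) := by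
          rcases lt_or_eq_of_le (le_trans hzb (h2 (i + 1) (by omega) (by omega))) with h | h
          · exact h
          · exact absurd h (hzP (i + 1) (by omega))
        have : X ((i + 1) - 1) < z := by simpa using hzi
        exact huk (i + 1) (by omega) (by omega) z this hzX
  have hKi : |K (i + 1) * δ - K i * δ| ≤ δ := by
    rw [← sub_mul, abs_mul, abs_of_pos hδ]
    exact mul_le_of_le_one_left hδ.le (hKd i hi)
  rcases hval a haP le_rfl hab with ha | ha <;> rcases hval b hbP hab le_rfl with hb | hb <;>
      rw [ha, hb]
  · simpa using hδ.le
  · exact hKi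
  · rw [abs_sub_comm]; exact hKi
  · simpa using hδ.le


lemma ua_abs_le (hδ : 0 < δ) (hKd : ∀ j, j ≤ n → |K (j + 1) - K j| ≤ 1) :
    |ua δ n X K ε z| ≤ δ * (n + 1) := by
  unfold ua
  rw [abs_mul, abs_of_pos hδ]
  apply mul_le_mul_of_nonneg_left _ hδ.le
  calc |∑ j ∈ Finset.range (n + 1),
        (K (j + 1) - K j) * Real.smoothTransition ((z - X j) / ε)|
      ≤ ∑ j ∈ Finset.range (n + 1),
        |(K (j + 1) - K j) * Real.smoothTransition ((z - X j) / ε)| :=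
        Finset.abs_sum_le_sum_abs _ _
    _ ≤ ∑ j ∈ Finset.range (n + 1), 1 := by
        apply Finset.sum_le_sum
        intro j hj
        rw [abs_mul]
        apply mul_le_one₀ (hKd j (Nat.lt_succ_iff.mp (Finset.mem_range.mp hj)))
          (abs_nonneg _)
        rw [abs_of_nonneg (Real.smoothTransition.nonneg _)]
        exact Real.smoothTransition.le_one _
    _ = (n + 1 : ℝ) := by simp
 
lemma K_abs_le (hK0 : K 0 = 0) (hKd : ∀ j, j ≤ n → |K (j + 1) - K j| ≤ 1) :
    ∀ i, i ≤ n + 1 → |K i| ≤ i := by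
  intro i
  induction i with
  | zero => simp [hK0]
  | succ i ih =>
    intro hi
    have h1 : |K (i + 1)| ≤ |K i| + |K (i + 1) - K i| := by
      have := abs_add_le (K i) (K (i + 1) - K i)
      simpa using this
    have := ih (by omega)
    have := hKd i (by omega)
    push_cast
    linarith

lemma u_abs_le (hδ : 0 < δ)
    (hX : ∀ i, i < n → X i < X (i + 1))
    (hK0 : K 0 = 0) (hKd : ∀ j, j ≤ n → |K (j + 1) - K j| ≤ 1)
    (hu0 : ∀ y, y < X 0 → u y = 0) (hun : ∀ y, X n < y → u y = 0)
    (huk : ∀ i, 1 ≤ i → i ≤ n → ∀ y, X (i - 1) < y → y < X i → u y = K i * δ)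
    (hzP : ∀ i, i ≤ n → z ≠ X i) :
    |u z| ≤ δ * (n + 1) := by
  classical
  have hpos : (0 : ℝ) ≤ δ * (n + 1) := by positivity
  rcases lt_or_gt_of_ne (hzP 0 (Nat.zero_le _)) with h0 | h0
  · rw [hu0 z h0]; simpa using hpos
  rcases lt_or_gt_of_ne (hzP n le_rfl) with hn | hn
  swap
  · rw [hun z hn]; simpa using hpos
  obtain ⟨i, hi_le, hPi, hgr⟩ : ∃ i, i ≤ n ∧ X i < z ∧
      ∀ j, i < j → j ≤ n → ¬(X j < z) :=
    ⟨Nat.findGreatest (fun j => X j < z) n, Nat.findGreatest_le n,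
      Nat.findGreatest_spec (P := fun j => X j < z) (Nat.zero_le _) h0,
      fun j h1 h2 => Nat.findGreatest_is_greatest h1 h2⟩
  have hin : i < n := by
    rcases eq_or_lt_of_le hi_le with rfl | h
    · exact absurd hPi (asymm hn)
    · exact h
  have hzX : z < X (i + 1) := by
    rcases lt_or_eq_of_le (le_of_not_gt (hgr (i + 1) (by omega) (by omega))) with h | h
    · exact h
    · exact absurd h (hzP (i + 1) (by omega))
  have : X ((i + 1) - 1) < z := by simpa using hPi
  rw [huk (i + 1) (by omega) (by omega) z this hzX, abs_mul, abs_of_pos hδ, mul_comm]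
  apply mul_le_mul_of_nonneg_left _ hδ.le
  calc |K (i + 1)| ≤ (i + 1 : ℕ) := K_abs_le hK0 hKd (i + 1) (by omega)
    _ ≤ (n + 1 : ℝ) := by
        push_cast
        have : (i : ℝ) ≤ n := by exact_mod_cast hi_le
        linarith
 

/-! ### Measure-theoretic estimates -/

/-- The full-line energy of a single slice at distance `≥ d`. -/
def cInt (δ p d : ℝ) : ℝ≥0∞ :=
  ∫⁻ t in {t : ℝ | d ≤ |t|}, ENNReal.ofReal (δ ^ p / |t| ^ (1 + p))

variable {d : ℝ}

lemma measurableSet_abs_ge : MeasurableSet {t : ℝ | d ≤ |t|} :=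
  measurableSet_le measurable_const continuous_abs.measurable

lemma cInt_ne_top (hp : 1 ≤ p) (hd : 0 < d) : cInt δ p d ≠ ∞ := by
  have hset : {t : ℝ | d ≤ |t|} = Iic (-d) ∪ Ici d := by
    ext t
    simp only [mem_setOf_eq, mem_union, mem_Iic, mem_Ici, le_abs, le_neg]
    tauto
  have hJ : ∫⁻ t in Ici d, ENNReal.ofReal (δ ^ p / |t| ^ (1 + p)) < ∞ := by
    have h1 : IntegrableOn (fun t : ℝ => δ ^ p * t ^ (-(1 + p))) (Ioi d) :=
      (integrableOn_Ioi_rpow_of_lt (by linarith) hd).const_mul _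
    have h2 : IntegrableOn (fun t : ℝ => δ ^ p / |t| ^ (1 + p)) (Ioi d) := by
      refine h1.congr_fun (fun t ht => ?_) measurableSet_Ioi
      have ht' : 0 < t := hd.trans ht
      beta_reduce
      rw [abs_of_pos ht', Real.rpow_neg ht'.le, div_eq_mul_inv]
    have h3 : IntegrableOn (fun t : ℝ => δ ^ p / |t| ^ (1 + p)) (Ici d) :=
      h2.congr_set_ae Ioi_ae_eq_Ici.symm
    calc ∫⁻ t in Ici d, ENNReal.ofReal (δ ^ p / |t| ^ (1 + p))
        ≤ ∫⁻ t in Ici d, ‖δ ^ p / |t| ^ (1 + p)‖ₑ :=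
          lintegral_mono fun t => Real.ofReal_le_enorm _
      _ < ∞ := h3.2
  have hneg : ∫⁻ t in Iic (-d), ENNReal.ofReal (δ ^ p / |t| ^ (1 + p))
      = ∫⁻ t in Ici d, ENNReal.ofReal (δ ^ p / |t| ^ (1 + p)) := by
    have hmp : MeasurePreserving (fun x : ℝ => -x) volume volume :=
      Measure.measurePreserving_neg _
    have hemb : MeasurableEmbedding (fun x : ℝ => -x) :=
      (Homeomorph.neg ℝ).measurableEmbedding
    have h := hmp.setLIntegral_comp_emb hemb
      (fun t => ENNReal.ofReal (δ ^ p / |t| ^ (1 + p))) (Iic (-d))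
    have himg : (fun x : ℝ => -x) '' Iic (-d) = Ici d := by
      ext t
      constructor
      · rintro ⟨s, hs, rfl⟩
        simp only [mem_Iic] at hs
        simp only [mem_Ici]
        linarith
      · intro ht
        simp only [mem_Ici] at ht
        exact ⟨-t, by simp only [mem_Iic]; linarith, by ring⟩
    rw [himg] at h
    rw [← h]
    refine lintegral_congr fun t => ?_
    rw [abs_neg]
  rw [cInt, hset]
  refine ne_of_lt (lt_of_le_of_lt (lintegral_union_le _ _ _) ?_)
  rw [hneg]
  exact ENNReal.add_lt_top.mpr ⟨hJ, hJ⟩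

lemma shift_integral (a : ℝ) :
    ∫⁻ z in {z : ℝ | d ≤ |z - a|}, ENNReal.ofReal (δ ^ p / |z - a| ^ (1 + p))
      = cInt δ p d := by
  have hmeas : MeasurableSet {t : ℝ | d ≤ |t|} := measurableSet_abs_ge
  have hmeas' : MeasurableSet {z : ℝ | d ≤ |z - a|} :=
    measurableSet_le measurable_const (continuous_abs.comp
      (continuous_id.sub continuous_const)).measurable
  set G : ℝ → ℝ≥0∞ :=
    ({t : ℝ | d ≤ |t|}).indicator
      (fun t => ENNReal.ofReal (δ ^ p / |t| ^ (1 + p))) with hG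
  have h1 : ∫⁻ z in {z : ℝ | d ≤ |z - a|}, ENNReal.ofReal (δ ^ p / |z - a| ^ (1 + p))
      = ∫⁻ z, G (z + -a) := by
    rw [← lintegral_indicator hmeas']
    refine lintegral_congr fun z => ?_
    have hzmem : z ∈ {z : ℝ | d ≤ |z - a|} ↔ (z + -a) ∈ {t : ℝ | d ≤ |t|} := by
      simp [sub_eq_add_neg]
    by_cases hz : z ∈ {z : ℝ | d ≤ |z - a|}
    · rw [indicator_of_mem hz, hG, indicator_of_mem (hzmem.mp hz)]
      simp [sub_eq_add_neg]
    · rw [indicator_of_notMem hz, hG, indicator_of_notMem (fun hc => hz (hzmem.mpr hc))]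
  rw [h1, lintegral_add_right_eq_self G (-a), hG, lintegral_indicator hmeas]
  rfl

lemma slice_fst (hp : 1 ≤ p) {S : Set ℝ} (hS : MeasurableSet S) :
    ∫⁻ q in {q : ℝ × ℝ | q.1 ∈ S ∧ d ≤ |q.2 - q.1|},
        ENNReal.ofReal (δ ^ p / |q.2 - q.1| ^ (1 + p))
      = cInt δ p d * volume S := by
  have hfm : Measurable (fun q : ℝ × ℝ => ENNReal.ofReal (δ ^ p / |q.2 - q.1| ^ (1 + p))) :=
    ENNReal.measurable_ofReal.comp (measurable_const.div
      (((Real.continuous_rpow_const (by linarith : (0:ℝ) ≤ 1 + p)).comp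
        ((continuous_snd.sub continuous_fst).abs)).measurable))
  have hA : MeasurableSet {q : ℝ × ℝ | q.1 ∈ S ∧ d ≤ |q.2 - q.1|} := by
    have : {q : ℝ × ℝ | q.1 ∈ S ∧ d ≤ |q.2 - q.1|}
        = (Prod.fst ⁻¹' S) ∩ {q : ℝ × ℝ | d ≤ |q.2 - q.1|} := rfl
    rw [this]
    exact (measurable_fst hS).inter
      (measurableSet_le measurable_const ((continuous_snd.sub continuous_fst).abs.measurable))
  rw [← lintegral_indicator hA, Measure.volume_eq_prod,
    MeasureTheory.lintegral_prod _ ((hfm.indicator hA).aemeasurable)]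
  have hinner : ∀ x : ℝ,
      (∫⁻ y, ({q : ℝ × ℝ | q.1 ∈ S ∧ d ≤ |q.2 - q.1|}).indicator
        (fun q : ℝ × ℝ => ENNReal.ofReal (δ ^ p / |q.2 - q.1| ^ (1 + p))) (x, y))
      = S.indicator (fun _ => cInt δ p d) x := by
    intro x
    by_cases hx : x ∈ S
    · rw [indicator_of_mem hx]
      have hpt : ∀ y : ℝ,
          ({q : ℝ × ℝ | q.1 ∈ S ∧ d ≤ |q.2 - q.1|}).indicator
            (fun q : ℝ × ℝ => ENNReal.ofReal (δ ^ p / |q.2 - q.1| ^ (1 + p))) (x, y)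
          = ({y : ℝ | d ≤ |y - x|}).indicator
            (fun y => ENNReal.ofReal (δ ^ p / |y - x| ^ (1 + p))) y := by
        intro y
        by_cases hy : d ≤ |y - x|
        · have m1 : (x, y) ∈ {q : ℝ × ℝ | q.1 ∈ S ∧ d ≤ |q.2 - q.1|} := ⟨hx, hy⟩
          have m2 : y ∈ {y : ℝ | d ≤ |y - x|} := hy
          rw [indicator_of_mem m1, indicator_of_mem m2]
        · have m2 : y ∉ {y : ℝ | d ≤ |y - x|} := hy
          rw [indicator_of_notMem (fun hc => hy hc.2), indicator_of_notMem m2]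
      have hms : MeasurableSet {y : ℝ | d ≤ |y - x|} :=
        measurableSet_le measurable_const ((continuous_id.sub continuous_const).abs).measurable
      rw [lintegral_congr hpt, lintegral_indicator hms, shift_integral x]
    · rw [indicator_of_notMem hx]
      have hpt : ∀ y : ℝ,
          ({q : ℝ × ℝ | q.1 ∈ S ∧ d ≤ |q.2 - q.1|}).indicator
            (fun q : ℝ × ℝ => ENNReal.ofReal (δ ^ p / |q.2 - q.1| ^ (1 + p))) (x, y) = 0 :=
        fun y => indicator_of_notMem (fun hc => hx hc.1) _
      rw [lintegral_congr hpt, lintegral_zero]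
  rw [lintegral_congr hinner, lintegral_indicator_const hS, mul_comm]

lemma slice_snd (hp : 1 ≤ p) {S : Set ℝ} (hS : MeasurableSet S) :
    ∫⁻ q in {q : ℝ × ℝ | q.2 ∈ S ∧ d ≤ |q.2 - q.1|},
        ENNReal.ofReal (δ ^ p / |q.2 - q.1| ^ (1 + p))
      = cInt δ p d * volume S := by
  have hfm : Measurable (fun q : ℝ × ℝ => ENNReal.ofReal (δ ^ p / |q.2 - q.1| ^ (1 + p))) :=
    ENNReal.measurable_ofReal.comp (measurable_const.div
      (((Real.continuous_rpow_const (by linarith : (0:ℝ) ≤ 1 + p)).comp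
        ((continuous_snd.sub continuous_fst).abs)).measurable))
  have hA : MeasurableSet {q : ℝ × ℝ | q.2 ∈ S ∧ d ≤ |q.2 - q.1|} := by
    have : {q : ℝ × ℝ | q.2 ∈ S ∧ d ≤ |q.2 - q.1|}
        = (Prod.snd ⁻¹' S) ∩ {q : ℝ × ℝ | d ≤ |q.2 - q.1|} := rfl
    rw [this]
    exact (measurable_snd hS).inter
      (measurableSet_le measurable_const ((continuous_snd.sub continuous_fst).abs.measurable))
  rw [← lintegral_indicator hA, Measure.volume_eq_prod,
    MeasureTheory.lintegral_prod_symm _ ((hfm.indicator hA).aemeasurable)]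
  have hinner : ∀ y : ℝ,
      (∫⁻ x, ({q : ℝ × ℝ | q.2 ∈ S ∧ d ≤ |q.2 - q.1|}).indicator
        (fun q : ℝ × ℝ => ENNReal.ofReal (δ ^ p / |q.2 - q.1| ^ (1 + p))) (x, y))
      = S.indicator (fun _ => cInt δ p d) y := by
    intro y
    by_cases hy : y ∈ S
    · rw [indicator_of_mem hy]
      have hpt : ∀ x : ℝ,
          ({q : ℝ × ℝ | q.2 ∈ S ∧ d ≤ |q.2 - q.1|}).indicator
            (fun q : ℝ × ℝ => ENNReal.ofReal (δ ^ p / |q.2 - q.1| ^ (1 + p))) (x, y)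
          = ({x : ℝ | d ≤ |x - y|}).indicator
            (fun x => ENNReal.ofReal (δ ^ p / |x - y| ^ (1 + p))) x := by
        intro x
        by_cases hx : d ≤ |y - x|
        · have m1 : (x, y) ∈ {q : ℝ × ℝ | q.2 ∈ S ∧ d ≤ |q.2 - q.1|} := ⟨hy, hx⟩
          have m2 : x ∈ {x : ℝ | d ≤ |x - y|} := by
            rw [mem_setOf_eq, abs_sub_comm]; exact hx
          rw [indicator_of_mem m1, indicator_of_mem m2, abs_sub_comm]
        · have m2 : x ∉ {x : ℝ | d ≤ |x - y|} := by
            rw [mem_setOf_eq, abs_sub_comm]; exact hx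
          rw [indicator_of_notMem (fun hc => hx hc.2), indicator_of_notMem m2]
      have hms : MeasurableSet {x : ℝ | d ≤ |x - y|} :=
        measurableSet_le measurable_const ((continuous_id.sub continuous_const).abs).measurable
      rw [lintegral_congr hpt, lintegral_indicator hms, shift_integral y]
    · rw [indicator_of_notMem hy]
      have hpt : ∀ x : ℝ,
          ({q : ℝ × ℝ | q.2 ∈ S ∧ d ≤ |q.2 - q.1|}).indicator
            (fun q : ℝ × ℝ => ENNReal.ofReal (δ ^ p / |q.2 - q.1| ^ (1 + p))) (x, y) = 0 :=
        fun x => indicator_of_notMem (fun hc => hy hc.1) _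
      rw [lintegral_congr hpt, lintegral_zero]
  rw [lintegral_congr hinner, lintegral_indicator_const hS, mul_comm]

end SmoothApproxAux


/-- The one-dimensional non-local functional `Λ_{δ,p}(u,Ω)`. -/
def Lambda1 (p δ : ℝ) (u : ℝ → ℝ) (Ω : Set ℝ) : ℝ≥0∞ :=
  ∫⁻ q in {q : ℝ × ℝ | q.1 ∈ Ω ∧ q.2 ∈ Ω ∧ δ < |u q.2 - u q.1|},
    ENNReal.ofReal (δ ^ p / |q.2 - q.1| ^ (1 + p))

/-- The constant `C_p`. -/
def Cp (p : ℝ) : ℝ := if p = 1 then Real.log 2 else (1 / (p - 1)) * (1 - 1 / (2 : ℝ) ^ (p - 1))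

/-- `u` is a `δ`-step function: there are points `x_0 < x_1 < … < x_n` and integers
`k_1, …, k_n` such that `u = 0` outside `(x_0, x_n)`, `u = k_i·δ` on `(x_{i−1}, x_i)`,
`|k_1| = |k_n| = 1`, and `|k_i − k_{i−1}| = 1` for `i = 2,…,n`. -/
def IsDeltaStep (δ : ℝ) (u : ℝ → ℝ) : Prop :=
  ∃ (n : ℕ) (x : ℕ → ℝ) (kk : ℕ → ℤ),
    0 < n ∧
    (∀ i, i < n → x i < x (i + 1)) ∧
    (∀ y, y < x 0 → u y = 0) ∧
    (∀ y, x n < y → u y = 0) ∧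
    (∀ i, 1 ≤ i → i ≤ n → ∀ y, x (i - 1) < y → y < x i → u y = (kk i : ℝ) * δ) ∧
    |kk 1| = 1 ∧ |kk n| = 1 ∧
    (∀ i, 2 ≤ i → i ≤ n → |kk i - kk (i - 1)| = 1)

/-- **Smooth approximation of `δ`-step functions** (Proposition 3.9): every `δ`-step function
`u` admits a family of `C^∞` functions with compact support converging to `u` in `L^p(ℝ)`
whose energies `Λ_{δ,p}` converge to `Λ_{δ,p}(u,ℝ)`. -/
theorem smooth_approximation_delta_step (δ p : ℝ) (hδ : 0 < δ) (hp : 1 ≤ p)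
    (u : ℝ → ℝ) (hu : IsDeltaStep δ u) :
    ∃ uε : ℝ → ℝ → ℝ,
      (∀ ε, 0 < ε → ContDiff ℝ (⊤ : ℕ∞) (uε ε) ∧ HasCompactSupport (uε ε)) ∧
      Tendsto (fun ε => eLpNorm (fun x => uε ε x - u x) (ENNReal.ofReal p) volume)
        (𝓝[>] (0 : ℝ)) (𝓝 0) ∧
      Tendsto (fun ε => Lambda1 p δ (uε ε) univ) (𝓝[>] (0 : ℝ))
        (𝓝 (Lambda1 p δ u univ)) := by
  classical
  obtain ⟨n, X, kk, hn, hX, hu0, hun, huk0, hk1, hkn, hkd0⟩ := hu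
  set K : ℕ → ℝ := fun i => if i = 0 ∨ n < i then 0 else (kk i : ℝ) with hKdef
  have hK0 : K 0 = 0 := by simp [hKdef]
  have hKn1 : K (n + 1) = 0 := by simp [hKdef]
  have hKeq : ∀ i, 1 ≤ i → i ≤ n → K i = (kk i : ℝ) := by
    intro i h1 h2
    rw [hKdef]
    exact if_neg (by push_neg; exact ⟨by omega, by omega⟩)
  have hKd : ∀ j, j ≤ n → |K (j + 1) - K j| ≤ 1 := by
    intro j hj
    rcases Nat.eq_zero_or_pos j with rfl | hj1
    · rw [hK0, hKeq 1 le_rfl hn, sub_zero, ← Int.cast_abs, hk1]; norm_num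
    · rcases eq_or_lt_of_le hj with rfl | hjn
      · rw [hKn1, zero_sub, abs_neg, hKeq j hj1 le_rfl, ← Int.cast_abs, hkn]; norm_num
      · rw [hKeq (j + 1) (by omega) (by omega), hKeq j (by omega) hj]
        have h := hkd0 (j + 1) (by omega) (by omega)
        rw [show j + 1 - 1 = j from rfl] at h
        rw [← Int.cast_sub, ← Int.cast_abs, h]; norm_num
  have hukK : ∀ i, 1 ≤ i → i ≤ n → ∀ y, X (i - 1) < y → y < X i → u y = K i * δ := by
    intro i h1 h2 y hy1 hy2
    rw [huk0 i h1 h2 y hy1 hy2, hKeq i h1 h2]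
  have hne : (Finset.range n).Nonempty := Finset.nonempty_range_iff.mpr (by omega)
  set g : ℝ := (Finset.range n).inf' hne (fun i => X (i + 1) - X i) with hgdef
  have hg : 0 < g := by
    rw [hgdef, Finset.lt_inf'_iff]
    exact fun i hi => sub_pos.mpr (hX i (Finset.mem_range.mp hi))
  have hgap : ∀ i, i < n → X i + g ≤ X (i + 1) := by
    intro i hi
    have h : g ≤ X (i + 1) - X i := Finset.inf'_le _ (Finset.mem_range.mpr hi)
    linarith
  set d : ℝ := g / 2 with hddef
  have hd : 0 < d := by rw [hddef]; positivity
  -- the finite set of nodes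
  set P : Set ℝ := X '' {i | i ≤ n} with hPdef
  have hPfin : P.Finite := (Set.finite_Iic n).image X
  -- the transition zones
  set Zc : ℝ → Set ℝ := fun ε => ⋃ j ∈ Finset.range (n + 1), Icc (X j) (X j + ε) with hZdef
  have hZmeas : ∀ ε : ℝ, MeasurableSet (Zc ε) := fun ε =>
    (Finset.range (n + 1)).measurableSet_biUnion fun j _ => measurableSet_Icc
  have hZvol : ∀ ε : ℝ, volume (Zc ε) ≤ (n + 1) * ENNReal.ofReal ε := by
    intro ε
    calc volume (Zc ε) ≤ ∑ j ∈ Finset.range (n + 1), volume (Icc (X j) (X j + ε)) :=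
          measure_biUnion_finset_le _ _
      _ = (n + 1) * ENNReal.ofReal ε := by
          simp [Real.volume_Icc, Finset.sum_const, Finset.card_range, nsmul_eq_mul]
  have hoffZ : ∀ ε : ℝ, ∀ z, z ∉ Zc ε → ∀ j, j ≤ n → z < X j ∨ X j + ε < z := by
    intro ε z hz j hj
    rw [hZdef] at hz
    simp only [mem_iUnion, mem_Icc, not_exists, not_and, Finset.mem_range] at hz
    have := hz j (by omega)
    rcases lt_or_ge z (X j) with h | h
    · exact Or.inl h
    · exact Or.inr (lt_of_not_ge fun hc => this h hc)
  have hPae : ∀ᵐ z : ℝ, ∀ i, i ≤ n → z ≠ X i := by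
    filter_upwards [measure_eq_zero_iff_ae_notMem.mp (hPfin.measure_zero volume)] with z hzP
    exact fun i hi he => hzP ⟨i, hi, he.symm⟩
  refine ⟨fun ε => SmoothApproxAux.ua δ n X K ε, ?_, ?_, ?_⟩
  · -- smoothness and compact support
    intro ε hε
    refine ⟨SmoothApproxAux.ua_contDiff, ?_⟩
    apply HasCompactSupport.intro (isCompact_Icc (a := X 0) (b := X n + ε))
    intro z hz
    simp only [mem_Icc, not_and_or, not_le] at hz
    rcases hz with hz | hz
    · exact SmoothApproxAux.ua_eq_zero_left hε hX hz.le
    · exact SmoothApproxAux.ua_eq_zero_right hε hX hK0 hKn1 hz.le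
  · -- Lp convergence
    have hp0 : (0 : ℝ) < p := lt_of_lt_of_le one_pos hp
    have hp'0 : ENNReal.ofReal p ≠ 0 := (ENNReal.ofReal_pos.mpr hp0).ne'
    have hp'top : ENNReal.ofReal p ≠ ∞ := ENNReal.ofReal_ne_top
    set M : ℝ := δ * (n + 1) * 2 with hMdef
    have hM : 0 < M := by rw [hMdef]; positivity
    have hbnd : ∀ ε : ℝ, 0 < ε →
        eLpNorm (fun z => SmoothApproxAux.ua δ n X K ε z - u z) (ENNReal.ofReal p) volume
          ≤ (‖M‖₊ : ℝ≥0∞) * ((n + 1) * ENNReal.ofReal ε) ^ (1 / p) := by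
      intro ε hε
      have hae : ∀ᵐ z : ℝ, ‖SmoothApproxAux.ua δ n X K ε z - u z‖
          ≤ ‖(Zc ε).indicator (fun _ => M) z‖ := by
        filter_upwards [hPae] with z hzP
        by_cases hzZ : z ∈ Zc ε
        · rw [indicator_of_mem hzZ, Real.norm_eq_abs, Real.norm_eq_abs, abs_of_pos hM]
          have h1 := SmoothApproxAux.ua_abs_le (K := K) (X := X) (ε := ε) (z := z) hδ hKd
          have h2 := SmoothApproxAux.u_abs_le hδ hX hK0 hKd hu0 hun hukK hzP
          calc |SmoothApproxAux.ua δ n X K ε z - u z|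
              ≤ |SmoothApproxAux.ua δ n X K ε z| + |u z| := by
                rw [sub_eq_add_neg]
                exact le_trans (abs_add_le _ _) (le_of_eq (by rw [abs_neg]))
            _ ≤ M := by rw [hMdef]; linarith
        · rw [indicator_of_notMem hzZ]
          rw [SmoothApproxAux.ua_eq_u hε hX hK0 hKn1 hu0 hun hukK (hoffZ ε z hzZ)]
          simp
      calc eLpNorm (fun z => SmoothApproxAux.ua δ n X K ε z - u z) (ENNReal.ofReal p) volume
          ≤ eLpNorm ((Zc ε).indicator fun _ => M) (ENNReal.ofReal p) volume :=
            eLpNorm_mono_ae hae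
        _ = (‖M‖₊ : ℝ≥0∞) * volume (Zc ε) ^ (1 / (ENNReal.ofReal p).toReal) :=
            eLpNorm_indicator_const (hZmeas ε) hp'0 hp'top
        _ ≤ (‖M‖₊ : ℝ≥0∞) * ((n + 1) * ENNReal.ofReal ε) ^ (1 / p) := by
            rw [ENNReal.toReal_ofReal hp0.le]
            exact mul_le_mul_right (ENNReal.rpow_le_rpow (hZvol ε) (by positivity)) _
    have hB : Tendsto (fun ε : ℝ => (‖M‖₊ : ℝ≥0∞) * ((n + 1) * ENNReal.ofReal ε) ^ (1 / p))
        (𝓝[>] (0 : ℝ)) (𝓝 0) := by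
      have h2 : Tendsto (fun ε : ℝ => ENNReal.ofReal ε) (𝓝[>] (0 : ℝ)) (𝓝 0) := by
        have h3 := (ENNReal.continuous_ofReal.tendsto 0).mono_left
          (nhdsWithin_le_nhds (s := Ioi (0 : ℝ)))
        simpa using h3
      have h1 : Tendsto (fun ε : ℝ => ((n : ℝ≥0∞) + 1) * ENNReal.ofReal ε)
          (𝓝[>] (0 : ℝ)) (𝓝 0) := by
        have h4 := ENNReal.Tendsto.const_mul (a := (n : ℝ≥0∞) + 1) h2
          (Or.inr (by simp : ((n : ℝ≥0∞) + 1) ≠ ⊤))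
        simpa using h4
      have h5 := (ENNReal.tendsto_const_mul_rpow_nhds_zero_of_pos
        (c := (‖M‖₊ : ℝ≥0∞)) ENNReal.coe_ne_top (y := 1 / p) (by positivity)).comp h1
      simpa [Function.comp_def] using h5
    refine tendsto_of_tendsto_of_tendsto_of_le_of_le' tendsto_const_nhds hB ?_ ?_
    · filter_upwards with ε using zero_le
    · filter_upwards [self_mem_nhdsWithin] with ε hε using hbnd ε hε
  · -- energy convergence
    have hL : ∀ v : ℝ → ℝ, Lambda1 p δ v univ
        = ∫⁻ q in {q : ℝ × ℝ | δ < |v q.2 - v q.1|},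
            ENNReal.ofReal (δ ^ p / |q.2 - q.1| ^ (1 + p)) := by
      intro v
      simp only [Lambda1, mem_univ, true_and]
    have hcne : SmoothApproxAux.cInt δ p d ≠ ∞ := SmoothApproxAux.cInt_ne_top hp hd
    set N : Set (ℝ × ℝ) := {q : ℝ × ℝ | q.1 ∈ P ∨ q.2 ∈ P} with hNdef
    have hNnull : volume N = 0 := by
      have hsub : N ⊆ (P ×ˢ (univ : Set ℝ)) ∪ ((univ : Set ℝ) ×ˢ P) := by
        rintro ⟨x, y⟩ (h | h)
        · exact Or.inl ⟨h, mem_univ _⟩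
        · exact Or.inr ⟨mem_univ _, h⟩
      refine measure_mono_null hsub ?_
      rw [Measure.volume_eq_prod]
      apply measure_union_null
      · rw [Measure.prod_prod, hPfin.measure_zero, zero_mul]
      · rw [Measure.prod_prod, hPfin.measure_zero, mul_zero]
    have hPhiN : ∫⁻ q in N, ENNReal.ofReal (δ ^ p / |q.2 - q.1| ^ (1 + p)) = 0 :=
      setLIntegral_measure_zero _ _ hNnull
    have hPhiW : ∀ ε : ℝ,
        ∫⁻ q in {q : ℝ × ℝ | (q.1 ∈ Zc ε ∨ q.2 ∈ Zc ε) ∧ d ≤ |q.2 - q.1|},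
            ENNReal.ofReal (δ ^ p / |q.2 - q.1| ^ (1 + p))
          ≤ 2 * SmoothApproxAux.cInt δ p d * ((n + 1) * ENNReal.ofReal ε) := by
      intro ε
      have hsub : {q : ℝ × ℝ | (q.1 ∈ Zc ε ∨ q.2 ∈ Zc ε) ∧ d ≤ |q.2 - q.1|}
          ⊆ {q : ℝ × ℝ | q.1 ∈ Zc ε ∧ d ≤ |q.2 - q.1|}
            ∪ {q : ℝ × ℝ | q.2 ∈ Zc ε ∧ d ≤ |q.2 - q.1|} := by
        rintro ⟨x, y⟩ ⟨h1 | h1, h2⟩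
        · exact Or.inl ⟨h1, h2⟩
        · exact Or.inr ⟨h1, h2⟩
      calc ∫⁻ q in {q : ℝ × ℝ | (q.1 ∈ Zc ε ∨ q.2 ∈ Zc ε) ∧ d ≤ |q.2 - q.1|},
              ENNReal.ofReal (δ ^ p / |q.2 - q.1| ^ (1 + p))
          ≤ ∫⁻ q in {q : ℝ × ℝ | q.1 ∈ Zc ε ∧ d ≤ |q.2 - q.1|}
              ∪ {q : ℝ × ℝ | q.2 ∈ Zc ε ∧ d ≤ |q.2 - q.1|},
              ENNReal.ofReal (δ ^ p / |q.2 - q.1| ^ (1 + p)) := lintegral_mono_set hsub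
        _ ≤ (∫⁻ q in {q : ℝ × ℝ | q.1 ∈ Zc ε ∧ d ≤ |q.2 - q.1|},
              ENNReal.ofReal (δ ^ p / |q.2 - q.1| ^ (1 + p)))
            + ∫⁻ q in {q : ℝ × ℝ | q.2 ∈ Zc ε ∧ d ≤ |q.2 - q.1|},
              ENNReal.ofReal (δ ^ p / |q.2 - q.1| ^ (1 + p)) := lintegral_union_le _ _ _
        _ = SmoothApproxAux.cInt δ p d * volume (Zc ε)
            + SmoothApproxAux.cInt δ p d * volume (Zc ε) := by
            rw [SmoothApproxAux.slice_fst hp (hZmeas ε), SmoothApproxAux.slice_snd hp (hZmeas ε)]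
        _ ≤ 2 * SmoothApproxAux.cInt δ p d * ((n + 1) * ENNReal.ofReal ε) := by
            rw [two_mul, add_mul]
            exact add_le_add (mul_le_mul_right (hZvol ε) _) (mul_le_mul_right (hZvol ε) _)
    have hDua : ∀ ε : ℝ, 0 < ε → ε ≤ d → ∀ x y : ℝ,
        δ < |SmoothApproxAux.ua δ n X K ε y - SmoothApproxAux.ua δ n X K ε x| →
        d ≤ |y - x| := by
      intro ε hε hεd x y hq
      by_contra hc
      push_neg at hc
      rw [hddef] at hc hεd
      exact absurd (SmoothApproxAux.ua_dist_le hδ hε hεd hX hg hgap hK0 hKd hc) (not_le.mpr hq)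
    have hDu : ∀ x y : ℝ, (∀ i, i ≤ n → x ≠ X i) → (∀ i, i ≤ n → y ≠ X i) →
        δ < |u y - u x| → d ≤ |y - x| := by
      intro x y hx hy hq
      by_contra hc
      push_neg at hc
      rw [hddef] at hc
      exact absurd (SmoothApproxAux.u_dist_le hδ hX hg hgap hK0 hKn1 hKd hu0 hun hukK hx hy hc)
        (not_le.mpr hq)
    have hmemP : ∀ x : ℝ, x ∉ P → ∀ i, i ≤ n → x ≠ X i := by
      intro x hx i hi he
      exact hx ⟨i, hi, he.symm⟩
    have hfin : Lambda1 p δ u univ ≠ ∞ := by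
      rw [hL u]
      have hsub : {q : ℝ × ℝ | δ < |u q.2 - u q.1|}
          ⊆ N ∪ ({q : ℝ × ℝ | q.1 ∈ Icc (X 0) (X n) ∧ d ≤ |q.2 - q.1|}
            ∪ {q : ℝ × ℝ | q.2 ∈ Icc (X 0) (X n) ∧ d ≤ |q.2 - q.1|}) := by
        rintro ⟨x, y⟩ hq
        simp only [mem_setOf_eq] at hq
        by_cases hxP : x ∈ P
        · exact Or.inl (Or.inl hxP)
        by_cases hyP : y ∈ P
        · exact Or.inl (Or.inr hyP)
        have hD : d ≤ |y - x| := hDu x y (hmemP x hxP) (hmemP y hyP) hq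
        right
        by_cases hxK : x ∈ Icc (X 0) (X n)
        · exact Or.inl ⟨hxK, hD⟩
        by_cases hyK : y ∈ Icc (X 0) (X n)
        · exact Or.inr ⟨hyK, hD⟩
        exfalso
        have hux : u x = 0 := by
          rw [mem_Icc, not_and_or, not_le, not_le] at hxK
          rcases hxK with h | h
          · exact hu0 x h
          · exact hun x h
        have huy : u y = 0 := by
          rw [mem_Icc, not_and_or, not_le, not_le] at hyK
          rcases hyK with h | h
          · exact hu0 y h
          · exact hun y h
        rw [hux, huy, sub_zero, abs_zero] at hq
        linarith
      refine ne_of_lt (lt_of_le_of_lt (lintegral_mono_set hsub) ?_)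
      refine lt_of_le_of_lt ((lintegral_union_le _ _ _).trans
        (add_le_add le_rfl (lintegral_union_le _ _ _))) ?_
      rw [hPhiN, SmoothApproxAux.slice_fst hp measurableSet_Icc,
        SmoothApproxAux.slice_snd hp measurableSet_Icc, zero_add]
      have hIccvol : volume (Icc (X 0) (X n)) ≠ ∞ := by
        rw [Real.volume_Icc]; exact ENNReal.ofReal_ne_top
      exact ENNReal.add_lt_top.mpr ⟨ENNReal.mul_lt_top hcne.lt_top hIccvol.lt_top,
        ENNReal.mul_lt_top hcne.lt_top hIccvol.lt_top⟩
    -- the two inclusions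
    have hinc1 : ∀ ε : ℝ, 0 < ε → ε ≤ d →
        {q : ℝ × ℝ | δ < |u q.2 - u q.1|}
          ⊆ {q : ℝ × ℝ | δ < |SmoothApproxAux.ua δ n X K ε q.2
              - SmoothApproxAux.ua δ n X K ε q.1|}
            ∪ ({q : ℝ × ℝ | (q.1 ∈ Zc ε ∨ q.2 ∈ Zc ε) ∧ d ≤ |q.2 - q.1|} ∪ N) := by
      intro ε hε hεd
      rintro ⟨x, y⟩ hq
      simp only [mem_setOf_eq] at hq
      by_cases hxP : x ∈ P
      · exact Or.inr (Or.inr (Or.inl hxP))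
      by_cases hyP : y ∈ P
      · exact Or.inr (Or.inr (Or.inr hyP))
      have hD : d ≤ |y - x| := hDu x y (hmemP x hxP) (hmemP y hyP) hq
      by_cases hZ : x ∈ Zc ε ∨ y ∈ Zc ε
      · exact Or.inr (Or.inl ⟨hZ, hD⟩)
      push_neg at hZ
      left
      rw [mem_setOf_eq,
        SmoothApproxAux.ua_eq_u hε hX hK0 hKn1 hu0 hun hukK (hoffZ ε x hZ.1),
        SmoothApproxAux.ua_eq_u hε hX hK0 hKn1 hu0 hun hukK (hoffZ ε y hZ.2)]
      exact hq
    have hinc2 : ∀ ε : ℝ, 0 < ε → ε ≤ d →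
        {q : ℝ × ℝ | δ < |SmoothApproxAux.ua δ n X K ε q.2
            - SmoothApproxAux.ua δ n X K ε q.1|}
          ⊆ {q : ℝ × ℝ | δ < |u q.2 - u q.1|}
            ∪ ({q : ℝ × ℝ | (q.1 ∈ Zc ε ∨ q.2 ∈ Zc ε) ∧ d ≤ |q.2 - q.1|} ∪ N) := by
      intro ε hε hεd
      rintro ⟨x, y⟩ hq
      simp only [mem_setOf_eq] at hq
      have hD : d ≤ |y - x| := hDua ε hε hεd x y hq
      by_cases hZ : x ∈ Zc ε ∨ y ∈ Zc ε
      · exact Or.inr (Or.inl ⟨hZ, hD⟩)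
      push_neg at hZ
      left
      rw [mem_setOf_eq,
        ← SmoothApproxAux.ua_eq_u hε hX hK0 hKn1 hu0 hun hukK (hoffZ ε x hZ.1),
        ← SmoothApproxAux.ua_eq_u hε hX hK0 hKn1 hu0 hun hukK (hoffZ ε y hZ.2)]
      exact hq
    -- conclusion
    rw [ENNReal.tendsto_nhds hfin]
    intro η hη
    have hCtend : Tendsto
        (fun ε : ℝ => 2 * SmoothApproxAux.cInt δ p d * ((n + 1) * ENNReal.ofReal ε))
        (𝓝[>] (0 : ℝ)) (𝓝 0) := by
      have h2 : Tendsto (fun ε : ℝ => ENNReal.ofReal ε) (𝓝[>] (0 : ℝ)) (𝓝 0) := by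
        have h3 := (ENNReal.continuous_ofReal.tendsto 0).mono_left
          (nhdsWithin_le_nhds (s := Ioi (0 : ℝ)))
        simpa using h3
      have h4 := ENNReal.Tendsto.const_mul
        (a := 2 * SmoothApproxAux.cInt δ p d * ((n : ℝ≥0∞) + 1)) h2
        (Or.inr (by
          apply ENNReal.mul_ne_top
          · exact ENNReal.mul_ne_top (by simp) hcne
          · simp))
      simp only [mul_zero] at h4
      convert h4 using 2 with ε
      ring
    filter_upwards [hCtend.eventually_lt_const hη,
      Ioo_mem_nhdsGT_of_mem (⟨le_refl (0 : ℝ), hd⟩ : (0 : ℝ) ∈ Ico (0 : ℝ) d)]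
      with ε hCε hεI
    obtain ⟨hε0, hεd⟩ := hεI
    rw [hL, hL]
    have hup : ∫⁻ q in {q : ℝ × ℝ | δ < |SmoothApproxAux.ua δ n X K ε q.2
          - SmoothApproxAux.ua δ n X K ε q.1|},
          ENNReal.ofReal (δ ^ p / |q.2 - q.1| ^ (1 + p))
        ≤ (∫⁻ q in {q : ℝ × ℝ | δ < |u q.2 - u q.1|},
          ENNReal.ofReal (δ ^ p / |q.2 - q.1| ^ (1 + p)))
          + 2 * SmoothApproxAux.cInt δ p d * ((n + 1) * ENNReal.ofReal ε) := by
      refine le_trans (lintegral_mono_set (hinc2 ε hε0 hεd.le)) ?_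
      refine le_trans (lintegral_union_le _ _ _) ?_
      refine add_le_add le_rfl ?_
      refine le_trans (lintegral_union_le _ _ _) ?_
      rw [hPhiN, add_zero]
      exact hPhiW ε
    have hdown : ∫⁻ q in {q : ℝ × ℝ | δ < |u q.2 - u q.1|},
          ENNReal.ofReal (δ ^ p / |q.2 - q.1| ^ (1 + p))
        ≤ (∫⁻ q in {q : ℝ × ℝ | δ < |SmoothApproxAux.ua δ n X K ε q.2
          - SmoothApproxAux.ua δ n X K ε q.1|},
          ENNReal.ofReal (δ ^ p / |q.2 - q.1| ^ (1 + p)))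
          + 2 * SmoothApproxAux.cInt δ p d * ((n + 1) * ENNReal.ofReal ε) := by
      refine le_trans (lintegral_mono_set (hinc1 ε hε0 hεd.le)) ?_
      refine le_trans (lintegral_union_le _ _ _) ?_
      refine add_le_add le_rfl ?_
      refine le_trans (lintegral_union_le _ _ _) ?_
      rw [hPhiN, add_zero]
      exact hPhiW ε
    constructor
    · rw [tsub_le_iff_right]
      exact hdown.trans (add_le_add_right hCε.le _)
    · exact hup.trans (add_le_add_right hCε.le _)
end
end

section
/- Let p ≥ 1 and δ > 0 be real numbers, and let u : ℝ → ℝ be a Lipschitz continuous function with Lipschitz constant L. Then for every x ∈ ℝ it holds that ∫_{J(δ,u,x)} δ^p/|y−x|^{1+p} dy ≤ (2/p)·L^p, where J(δ,u,x) := {y ∈ ℝ : |S_δu(y) − S_δu(x)| > δ} and S_δu is the vertical δ-segmentation of u. -/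
open MeasureTheory Filter Topology Set
open scoped ENNReal NNReal

noncomputable section

/-- The vertical `δ`-segmentation `S_δ u (x) = δ·⌊u(x)/δ⌋`. -/
def Sdelta (δ : ℝ) (u : ℝ → ℝ) (x : ℝ) : ℝ := δ * ⌊u x / δ⌋

lemma tail_lintegral (p δ c : ℝ) (hp : 1 ≤ p) (hδ : 0 < δ) (hc : 0 < c) :
    ∫⁻ t in Set.Ioi c, ENNReal.ofReal (δ ^ p / t ^ (1 + p))
      = ENNReal.ofReal (δ ^ p * (c ^ (-p) / p)) := by
  have hexp : -(1 + p) < -1 := by linarith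
  have hInt : IntegrableOn (fun t : ℝ => δ ^ p / t ^ (1 + p)) (Set.Ioi c) := by
    have h : IntegrableOn (fun t : ℝ => δ ^ p * t ^ (-(1 + p))) (Set.Ioi c) :=
      (integrableOn_Ioi_rpow_of_lt hexp hc).const_mul (δ ^ p)
    refine h.congr_fun (fun t ht => ?_) measurableSet_Ioi
    have ht0 : 0 < t := hc.trans ht
    dsimp only; rw [Real.rpow_neg ht0.le, div_eq_mul_inv]
  have hnn : 0 ≤ᵐ[volume.restrict (Set.Ioi c)] fun t : ℝ => δ ^ p / t ^ (1 + p) := by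
    filter_upwards [ae_restrict_mem measurableSet_Ioi] with t ht
    have ht0 : 0 < t := hc.trans ht
    positivity
  rw [← ofReal_integral_eq_lintegral_ofReal hInt hnn]
  congr 1
  have : ∫ t in Set.Ioi c, δ ^ p / t ^ (1 + p)
      = ∫ t in Set.Ioi c, δ ^ p * t ^ (-(1 + p)) := by
    refine setIntegral_congr_fun measurableSet_Ioi (fun t ht => ?_)
    have ht0 : 0 < t := hc.trans ht
    rw [Real.rpow_neg ht0.le, div_eq_mul_inv]
  rw [this, MeasureTheory.integral_const_mul, integral_Ioi_rpow_of_lt hexp hc]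
  have hp0 : p ≠ 0 := by positivity
  have : -(1 + p) + 1 = -p := by ring
  rw [this]
  rw [Real.rpow_neg hc.le]
  field_simp

/-- **Uniform bound on the pointwise hostility function** (inequality (3.12)): if `u` is
Lipschitz with constant `L`, then for every `x`,
`∫_{J(δ,u,x)} δ^p/|y−x|^{1+p} dy ≤ (2/p)·L^p`, where
`J(δ,u,x) = {y : |S_δu(y) − S_δu(x)| > δ}`. -/
theorem pointwise_hostility_bound (p δ : ℝ) (hp : 1 ≤ p) (hδ : 0 < δ)
    (u : ℝ → ℝ) (L : ℝ) (hL : 0 ≤ L)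
    (hlip : ∀ x y : ℝ, |u y - u x| ≤ L * |y - x|)
    (x : ℝ) :
    ∫⁻ y in {y : ℝ | δ < |Sdelta δ u y - Sdelta δ u x|},
        ENNReal.ofReal (δ ^ p / |y - x| ^ (1 + p))
      ≤ ENNReal.ofReal (2 / p * L ^ p) := by
  rcases eq_or_lt_of_le hL with hL0 | hL0
  · -- L = 0 : the set is empty
    have hconst : ∀ y, u y = u x := by
      intro y
      have := hlip x y
      rw [← hL0] at this
      simp only [zero_mul] at this
      have := abs_nonpos_iff.mp (this.trans (le_of_eq rfl))
      linarith [sub_eq_zero.mp this]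
    have hempty : {y : ℝ | δ < |Sdelta δ u y - Sdelta δ u x|} = ∅ := by
      ext y
      simp only [Set.mem_setOf_eq, Set.mem_empty_iff_false, iff_false, not_lt]
      rw [Sdelta, Sdelta, hconst y, sub_self, abs_zero]
      exact hδ.le
    rw [hempty]
    simp [ENNReal.ofReal]
  · -- L > 0
    set c : ℝ := δ / L with hc_def
    have hc : 0 < c := div_pos hδ hL0
    -- residual bound
    have hres : ∀ w, 0 ≤ u w - Sdelta δ u w ∧ u w - Sdelta δ u w < δ := by
      intro w
      constructor
      · have h1 : (⌊u w / δ⌋ : ℝ) ≤ u w / δ := Int.floor_le _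
        have := mul_le_mul_of_nonneg_left h1 hδ.le
        rw [mul_div_cancel₀ _ hδ.ne'] at this
        simpa [Sdelta] using this
      · have h2 : u w / δ < ⌊u w / δ⌋ + 1 := Int.lt_floor_add_one _
        have := mul_lt_mul_of_pos_left h2 hδ
        rw [mul_div_cancel₀ _ hδ.ne'] at this
        simp only [Sdelta]
        nlinarith
    -- subset of the two tails
    have hsub : {y : ℝ | δ < |Sdelta δ u y - Sdelta δ u x|}
        ⊆ Set.Iio (x - c) ∪ Set.Ioi (x + c) := by
      intro y hy
      simp only [Set.mem_setOf_eq] at hy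
      -- the segmentation difference is a δ-multiple, hence ≥ 2δ
      have hk : Sdelta δ u y - Sdelta δ u x = δ * ((⌊u y / δ⌋ - ⌊u x / δ⌋ : ℤ) : ℝ) := by
        simp [Sdelta]; ring
      set k : ℤ := ⌊u y / δ⌋ - ⌊u x / δ⌋ with hk_def
      have habs : |Sdelta δ u y - Sdelta δ u x| = δ * |(k : ℝ)| := by
        rw [hk, abs_mul, abs_of_pos hδ]
      have h1k : 1 < |(k : ℝ)| := by
        by_contra h
        push_neg at h
        have : |Sdelta δ u y - Sdelta δ u x| ≤ δ := by
          rw [habs]; nlinarith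
        linarith
    -- |k| ≥ 2 as an integer
      have h2k : (2 : ℝ) ≤ |(k : ℝ)| := by
        rw [← Int.cast_abs] at h1k ⊢
        have h1 : (1 : ℤ) < |k| := by exact_mod_cast h1k
        exact_mod_cast h1
      have h2δ : 2 * δ ≤ |Sdelta δ u y - Sdelta δ u x| := by
        rw [habs]; nlinarith
      -- residuals
      obtain ⟨hy0, hy1⟩ := hres y
      obtain ⟨hx0, hx1⟩ := hres x
      have hud : δ < |u y - u x| := by
        have key : |(u y - u x) - (Sdelta δ u y - Sdelta δ u x)| < δ := by
          rw [abs_lt]; constructor <;> nlinarith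
        have := abs_sub_abs_le_abs_sub (Sdelta δ u y - Sdelta δ u x) (u y - u x)
        rw [abs_sub_comm] at key
        linarith
      have hyx : c < |y - x| := by
        have := hlip x y
        rw [hc_def, div_lt_iff₀ hL0]
        calc δ < |u y - u x| := hud
          _ ≤ L * |y - x| := this
          _ = |y - x| * L := mul_comm _ _
      rcases lt_or_ge y x with h | h
      · left
        simp only [Set.mem_Iio]
        have : |y - x| = x - y := by rw [abs_of_neg (by linarith)]; ring
        linarith [this ▸ hyx]
      · right
        simp only [Set.mem_Ioi]
        have : |y - x| = y - x := abs_of_nonneg (by linarith)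
        linarith [this ▸ hyx]
    -- measurability of the integrand
    have hfm : Measurable fun y : ℝ => ENNReal.ofReal (δ ^ p / |y - x| ^ (1 + p)) := by
      fun_prop
    -- bound by the union
    refine le_trans (lintegral_mono_set hsub) ?_
    rw [lintegral_union measurableSet_Ioi (by
      refine Set.disjoint_left.mpr fun y hy1 hy2 => ?_
      simp only [Set.mem_Iio] at hy1
      simp only [Set.mem_Ioi] at hy2
      linarith)]
    -- right tail via translation t ↦ t + x
    have hright : ∫⁻ y in Set.Ioi (x + c), ENNReal.ofReal (δ ^ p / |y - x| ^ (1 + p))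
        = ENNReal.ofReal (δ ^ p * (c ^ (-p) / p)) := by
      have hmp := measurePreserving_add_right (volume : Measure ℝ) x
      have hpre : (fun t : ℝ => t + x) ⁻¹' Set.Ioi (x + c) = Set.Ioi c := by
        ext t
        simp only [Set.mem_preimage, Set.mem_Ioi]
        constructor <;> intro h <;> linarith
      rw [← hmp.setLIntegral_comp_preimage measurableSet_Ioi hfm, hpre]
      rw [← tail_lintegral p δ c hp hδ hc]
      refine setLIntegral_congr_fun measurableSet_Ioi (fun t ht => ?_)
      have ht0 : 0 < t := hc.trans ht
      have habs : |t + x - x| = t := by rw [show t + x - x = t by ring, abs_of_pos ht0]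
      rw [habs]
    -- left tail via reflection t ↦ x - t
    have hleft : ∫⁻ y in Set.Iio (x - c), ENNReal.ofReal (δ ^ p / |y - x| ^ (1 + p))
        = ENNReal.ofReal (δ ^ p * (c ^ (-p) / p)) := by
      have hmp : MeasurePreserving (fun t : ℝ => x - t) volume volume :=
        (measurePreserving_add_left volume x).comp (Measure.measurePreserving_neg volume)
      have hpre : (fun t : ℝ => x - t) ⁻¹' Set.Iio (x - c) = Set.Ioi c := by
        ext t
        simp only [Set.mem_preimage, Set.mem_Iio, Set.mem_Ioi]
        constructor <;> intro h <;> linarith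
      rw [← hmp.setLIntegral_comp_preimage measurableSet_Iio hfm, hpre]
      rw [← tail_lintegral p δ c hp hδ hc]
      refine setLIntegral_congr_fun measurableSet_Ioi (fun t ht => ?_)
      have ht0 : 0 < t := hc.trans ht
      have habs : |x - t - x| = t := by rw [show x - t - x = -t by ring, abs_neg, abs_of_pos ht0]
      rw [habs]
    rw [hleft, hright]
    -- final arithmetic: 2 * (δ^p * c^(-p) / p) = 2/p * L^p
    rw [← ENNReal.ofReal_add (by positivity) (by positivity)]
    apply le_of_eq
    congr 1
    have hδp' : (0:ℝ) < δ ^ p := Real.rpow_pos_of_pos hδ p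
    have hLp' : (0:ℝ) < L ^ p := Real.rpow_pos_of_pos hL0 p
    have hcpow : c ^ (-p) = δ ^ (-p) * L ^ p := by
      rw [hc_def, Real.rpow_neg (by positivity), Real.div_rpow hδ.le hL0.le,
        Real.rpow_neg hδ.le]
      field_simp
    rw [hcpow]
    have hδp : δ ^ p * δ ^ (-p) = 1 := by
      rw [← Real.rpow_add hδ]; simp
    have e : δ ^ p * (δ ^ (-p) * L ^ p / p) = (δ ^ p * δ ^ (-p)) * (L ^ p / p) := by ring
    rw [e, hδp, one_mul]
    ring
end
end

section
/- Let p ≥ 1 be a real number, let u ∈ PC¹_c(ℝ) (i.e. u : ℝ → ℝ has compact support, is Lipschitz continuous, and is of class C¹ on ℝ \ S for some finite set S ⊆ ℝ), and let x ∈ ℝ \ S be a point with u'(x) = 0. Then lim_{δ→0⁺} H_{δ,p}(x) = 0, where H_{δ,p}(x) := ∫_{J(δ,u,x)} δ^p/|y−x|^{1+p} dy and J(δ,u,x) := {y ∈ ℝ : |S_δu(y) − S_δu(x)| > δ}. -/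
open MeasureTheory Filter Topology Set
open scoped ENNReal NNReal

noncomputable section

lemma Sdelta_bounds (δ : ℝ) (hδ : 0 < δ) (u : ℝ → ℝ) (z : ℝ) :
    Sdelta δ u z ≤ u z ∧ u z < Sdelta δ u z + δ := by
  constructor
  · have := Int.floor_le (u z / δ)
    calc Sdelta δ u z = δ * ⌊u z / δ⌋ := rfl
      _ ≤ δ * (u z / δ) := by nlinarith
      _ = u z := by field_simp
  · have := Int.lt_floor_add_one (u z / δ)
    have h2 : u z / δ * δ < (⌊u z / δ⌋ + 1) * δ := by nlinarith
    have h3 : u z / δ * δ = u z := by field_simp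
    calc u z = u z / δ * δ := h3.symm
      _ < (⌊u z / δ⌋ + 1) * δ := h2
      _ = Sdelta δ u z + δ := by unfold Sdelta; ring

lemma Sdelta_step (δ : ℝ) (hδ : 0 < δ) (u : ℝ → ℝ) (x y : ℝ)
    (h : δ < |Sdelta δ u y - Sdelta δ u x|) : δ < |u y - u x| := by
  have hint : Sdelta δ u y - Sdelta δ u x = δ * ((⌊u y / δ⌋ : ℝ) - (⌊u x / δ⌋ : ℝ)) := by
    unfold Sdelta; ring
  set k : ℤ := ⌊u y / δ⌋ - ⌊u x / δ⌋ with hk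
  have hk' : Sdelta δ u y - Sdelta δ u x = δ * (k : ℝ) := by
    rw [hint]; push_cast [hk]; ring
  have habs : |Sdelta δ u y - Sdelta δ u x| = δ * |(k : ℝ)| := by
    rw [hk', abs_mul, abs_of_pos hδ]
  have h1k : 1 < |(k : ℝ)| := by
    by_contra hcon
    push_neg at hcon
    rw [habs] at h
    nlinarith
  have h2k : 2 ≤ |(k : ℝ)| := by
    rw [← Int.cast_abs] at h1k ⊢
    exact_mod_cast (by exact_mod_cast h1k : (1 : ℤ) < |k|)
  have h2δ : 2 * δ ≤ |Sdelta δ u y - Sdelta δ u x| := by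
    rw [habs]; nlinarith
  set A := Sdelta δ u y - Sdelta δ u x with hA
  set B := (u y - Sdelta δ u y) - (u x - Sdelta δ u x) with hB
  have hABsum : u y - u x = A + B := by rw [hA, hB]; ring
  have hBy := Sdelta_bounds δ hδ u y
  have hBx := Sdelta_bounds δ hδ u x
  have hBbound : |B| < δ := by
    have h1 : -δ < B := by rw [hB]; nlinarith [hBy.1, hBy.2, hBx.1, hBx.2]
    have h2 : B < δ := by rw [hB]; nlinarith [hBy.1, hBy.2, hBx.1, hBx.2]
    exact abs_lt.2 ⟨h1, h2⟩
  have habs2 : |A| ≤ |A + B| + |B| := by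
    calc |A| = |(A + B) + (-B)| := by ring_nf
      _ ≤ |A + B| + |(-B)| := abs_add_le _ _
      _ = |A + B| + |B| := by rw [abs_neg]
  rw [hABsum]
  linarith

lemma tail_lintegral_le (p : ℝ) (hp : 0 < p) (x a c : ℝ) (ha : 0 < a) (hc : 0 ≤ c) :
    ∫⁻ y in {y : ℝ | a < |y - x|}, ENNReal.ofReal (c / |y - x| ^ (1 + p))
      ≤ ENNReal.ofReal (2 * (c * (a ^ (-p) / p))) := by
  set f : ℝ → ℝ≥0∞ := fun t => ENNReal.ofReal (c / |t| ^ (1 + p)) with hf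
  have htrans : (∫⁻ y in {y : ℝ | a < |y - x|}, f (y - x)) = ∫⁻ t in {t : ℝ | a < |t|}, f t := by
    have hpre : {y : ℝ | a < |y - x|} = (· - x) ⁻¹' {t : ℝ | a < |t|} := rfl
    rw [hpre]
    exact (measurePreserving_sub_right volume x).setLIntegral_comp_preimage_emb
      (MeasurableEquiv.subRight x).measurableEmbedding f _
  have hsplit : {t : ℝ | a < |t|} = Iio (-a) ∪ Ioi a := by
    ext t
    simp only [mem_setOf_eq, lt_abs, mem_union, mem_Iio, mem_Ioi]
    constructor
    · rintro (h | h)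
      · right; exact h
      · left; linarith
    · rintro (h | h)
      · right; linarith
      · left; exact h
  have hneg : (∫⁻ t in Iio (-a), f t) = ∫⁻ t in Ioi a, f t := by
    have hpre : Iio (-a) = (fun t : ℝ => -t) ⁻¹' (Ioi a) := by
      ext t; simp [lt_neg]
    rw [hpre, ← (Measure.measurePreserving_neg (volume : Measure ℝ)).setLIntegral_comp_preimage_emb
      (MeasurableEquiv.neg ℝ).measurableEmbedding f (Ioi a)]
    refine lintegral_congr fun t => ?_
    simp [hf, abs_neg]
  have hIoi : (∫⁻ t in Ioi a, f t) = ENNReal.ofReal (c * (a ^ (-p) / p)) := by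
    have hcongr : (∫⁻ t in Ioi a, f t) = ∫⁻ t in Ioi a, ENNReal.ofReal (c * t ^ (-(1 + p))) := by
      refine setLIntegral_congr_fun measurableSet_Ioi (fun t ht => ?_)
      have ht0 : 0 < t := ha.trans ht
      rw [hf]
      simp only
      rw [abs_of_pos ht0, Real.rpow_neg ht0.le, div_eq_mul_inv]
    rw [hcongr]
    have hint : IntegrableOn (fun t : ℝ => c * t ^ (-(1 + p))) (Ioi a) := by
      exact (integrableOn_Ioi_rpow_of_lt (by linarith) ha).const_mul c
    rw [← ofReal_integral_eq_lintegral_ofReal hint]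
    · congr 1
      rw [MeasureTheory.integral_const_mul, integral_Ioi_rpow_of_lt (by linarith) ha]
      have h1 : -(1 + p) + 1 = -p := by ring
      rw [h1, neg_div_neg_eq]
    · refine (ae_restrict_iff' measurableSet_Ioi).2 (ae_of_all _ fun t ht => ?_)
      have ht0 : 0 < t := ha.trans ht
      positivity
  calc ∫⁻ y in {y : ℝ | a < |y - x|}, ENNReal.ofReal (c / |y - x| ^ (1 + p))
      = ∫⁻ t in {t : ℝ | a < |t|}, f t := htrans
    _ ≤ (∫⁻ t in Iio (-a), f t) + ∫⁻ t in Ioi a, f t := by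
        rw [hsplit]
        exact lintegral_union_le _ _ _
    _ = ENNReal.ofReal (c * (a ^ (-p) / p)) + ENNReal.ofReal (c * (a ^ (-p) / p)) := by
        rw [hneg, hIoi]
    _ ≤ ENNReal.ofReal (2 * (c * (a ^ (-p) / p))) := by
        rw [← ENNReal.ofReal_add (by positivity) (by positivity)]
        apply ENNReal.ofReal_le_ofReal
        ring_nf
        exact le_refl _

/-- **Asymptotic estimate at stationary points**: for a piecewise `C¹` function `u` with
compact support and a point `x ∉ S` with `u'(x) = 0`, the pointwise hostility
`H_{δ,p}(x) = ∫_{J(δ,u,x)} δ^p/|y−x|^{1+p} dy` tends to `0` as `δ → 0⁺`. -/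
theorem pointwise_hostility_vanishes_at_stationary_points (p : ℝ) (hp : 1 ≤ p)
    (u : ℝ → ℝ) (hsupp : HasCompactSupport u)
    (L : ℝ≥0) (hlip : LipschitzWith L u)
    (S : Finset ℝ) (hC1 : ∀ y : ℝ, y ∉ S → ContDiffAt ℝ 1 u y)
    (x : ℝ) (hx : x ∉ S) (hx' : deriv u x = 0) :
    Tendsto (fun δ => ∫⁻ y in {y : ℝ | δ < |Sdelta δ u y - Sdelta δ u x|},
        ENNReal.ofReal (δ ^ p / |y - x| ^ (1 + p)))
      (𝓝[>] (0 : ℝ)) (𝓝 0) := by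
  have hp0 : (0 : ℝ) < p := lt_of_lt_of_le one_pos hp
  rw [ENNReal.tendsto_nhds_zero]
  intro ε' hε'
  -- extract a real positive bound below ε'
  obtain ⟨η, hη0, hηε'⟩ : ∃ η : ℝ, 0 < η ∧ ENNReal.ofReal η ≤ ε' := by
    rcases ENNReal.lt_iff_exists_real_btwn.1 hε' with ⟨r, hr0, h1, h2⟩
    exact ⟨r, ENNReal.ofReal_pos.1 h1, h2.le⟩
  -- choose ε with 2 * ε^p / p ≤ η
  set ε : ℝ := min 1 (p * η / 2) with hεdef
  have hε0 : 0 < ε := lt_min one_pos (by positivity)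
  have hε1 : ε ≤ 1 := min_le_left _ _
  have hεη : ε ≤ p * η / 2 := min_le_right _ _
  have hεp : ε ^ p ≤ ε := by
    calc ε ^ p ≤ ε ^ (1 : ℝ) := Real.rpow_le_rpow_of_exponent_ge hε0 hε1 hp
      _ = ε := Real.rpow_one ε
  have hbound : 2 * (ε ^ p / p) ≤ η := by
    have h1 : ε ^ p / p ≤ η / 2 := by
      rw [div_le_div_iff₀ hp0 two_pos]
      nlinarith
    linarith
  -- get the little-o estimate from the vanishing derivative
  have hd : HasDerivAt u 0 x := by
    have hdiff := ((hC1 x hx).differentiableAt one_ne_zero).hasDerivAt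
    rwa [hx'] at hdiff
  have hlo : ∀ᶠ y in 𝓝 x, ‖u y - u x - (y - x) • (0 : ℝ)‖ ≤ ε * ‖y - x‖ :=
    (hasDerivAt_iff_isLittleO.1 hd).def hε0
  have hlo' : ∀ᶠ y in 𝓝 x, |u y - u x| ≤ ε * |y - x| := by
    filter_upwards [hlo] with y hy
    simpa [Real.norm_eq_abs] using hy
  rw [Metric.eventually_nhds_iff] at hlo'
  obtain ⟨r, hr0, hball⟩ := hlo'
  -- the estimate, for δ ∈ (0, ε * r)
  have hmem : Ioo (0 : ℝ) (ε * r) ∈ 𝓝[>] (0 : ℝ) :=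
    Ioo_mem_nhdsGT_of_mem ⟨le_refl 0, by positivity⟩
  filter_upwards [hmem] with δ hδ
  obtain ⟨hδ0, hδεr⟩ := hδ
  -- the bad set is contained in a tail
  have hJ : {y : ℝ | δ < |Sdelta δ u y - Sdelta δ u x|} ⊆ {y : ℝ | δ / ε < |y - x|} := by
    intro y hy
    have h1 : δ < |u y - u x| := Sdelta_step δ hδ0 u x y hy
    by_cases hcase : dist y x < r
    · have h2 := hball hcase
      rw [Real.dist_eq] at hcase
      have h3 : δ < ε * |y - x| := lt_of_lt_of_le h1 h2
      have : δ / ε < |y - x| := (div_lt_iff₀' hε0).2 h3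
      exact this
    · push_neg at hcase
      rw [Real.dist_eq] at hcase
      have h4 : δ / ε < r := (div_lt_iff₀' hε0).2 (by linarith [hδεr])
      exact lt_of_lt_of_le h4 hcase
  have haε : 0 < δ / ε := by positivity
  calc ∫⁻ y in {y : ℝ | δ < |Sdelta δ u y - Sdelta δ u x|},
          ENNReal.ofReal (δ ^ p / |y - x| ^ (1 + p))
      ≤ ∫⁻ y in {y : ℝ | δ / ε < |y - x|}, ENNReal.ofReal (δ ^ p / |y - x| ^ (1 + p)) :=
        lintegral_mono_set hJ
    _ ≤ ENNReal.ofReal (2 * (δ ^ p * ((δ / ε) ^ (-p) / p))) :=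
        tail_lintegral_le p hp0 x (δ / ε) (δ ^ p) haε (Real.rpow_nonneg hδ0.le p)
    _ = ENNReal.ofReal (2 * (ε ^ p / p)) := by
        congr 1
        have hkey : δ ^ p * (δ / ε) ^ (-p) = ε ^ p := by
          rw [Real.rpow_neg (by positivity), Real.div_rpow hδ0.le hε0.le]
          have hδp : (0 : ℝ) < δ ^ p := Real.rpow_pos_of_pos hδ0 p
          field_simp
        rw [← hkey]
        ring
    _ ≤ ENNReal.ofReal η := ENNReal.ofReal_le_ofReal hbound
    _ ≤ ε' := hηε'
end
end
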